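/- arXiv:1108.6264 — 8 statements merged into one kernel-verified Lean document; each statement's English description precedes it below -/
import Mathlib

section
/- Let φ₁, ..., φ_d : ℂ^d → ℂ be continuous functions, not all identically zero on an open set, such that for every x ∈ ℂ^d one has ⟨x, φ(x)⟩ = 0 (the standard bilinear pairing ∑ x_i φ_i(x) vanishes identically). If the span of φ₁, ..., φ_d has dimension at least 2, then the span of the functions x ↦ x_i φ_j(x), 1 ≤ i, j ≤ d, has dimension at least 2d - 1. -/
open Filter Topology

namespace Stmt1Aux

variable {d : ℕ}

/-- Expansion of a linear form along a line. -/
lemma L_shift (a x v : Fin d → ℂ) (t : ℂ) :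
    ∑ i, a i * (x + t • v) i = (∑ i, a i * x i) + t * ∑ i, a i * v i := by
  rw [Finset.mul_sum, ← Finset.sum_add_distrib]
  exact Finset.sum_congr rfl fun i _ => by simp [Pi.add_apply, Pi.smul_apply]; ring

lemma L_single (a : Fin d → ℂ) (j : Fin d) :
    ∑ i, a i * (Pi.single j 1 : Fin d → ℂ) i = a j := by
  rw [Finset.sum_eq_single j]
  · simp
  · intro i _ hij; simp [Pi.single_apply, hij]
  · simp

/-- Punctured-limit lemma: if `h` vanishes along a punctured line approach to `x`,
then `h x = 0`. -/
lemma limit_zero {h : (Fin d → ℂ) → ℂ} (hc : Continuous h) (x v : Fin d → ℂ)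
    (H : ∀ᶠ t in 𝓝[≠] (0:ℂ), h (x + t • v) = 0) : h x = 0 := by
  have hcont : Continuous fun t : ℂ => h (x + t • v) :=
    hc.comp (continuous_const.add (continuous_id.smul continuous_const))
  have h1 : Tendsto (fun t : ℂ => h (x + t • v)) (𝓝[≠] (0:ℂ)) (𝓝 (h x)) := by
    have := (hcont.tendsto 0).mono_left (nhdsWithin_le_nhds (s := {(0:ℂ)}ᶜ))
    simpa using this
  have h2 : Tendsto (fun t : ℂ => h (x + t • v)) (𝓝[≠] (0:ℂ)) (𝓝 0) :=
    Tendsto.congr' (H.mono fun t ht => ht.symm) tendsto_const_nhds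
  exact tendsto_nhds_unique h1 h2

/-- Density lemma for linear forms: a continuous function vanishing wherever a nonzero
linear form is nonzero vanishes everywhere. -/
lemma lin_density {a : Fin d → ℂ} (ha : a ≠ 0) {h : (Fin d → ℂ) → ℂ} (hc : Continuous h)
    (H : ∀ x : Fin d → ℂ, (∑ i, a i * x i) ≠ 0 → h x = 0) : ∀ x, h x = 0 := by
  obtain ⟨i0, hi0⟩ := Function.ne_iff.mp ha
  simp only [Pi.zero_apply] at hi0
  intro x
  by_cases hx : (∑ i, a i * x i) ≠ 0
  · exact H x hx
  push_neg at hx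
  apply limit_zero hc x (Pi.single i0 1 : Fin d → ℂ)
  filter_upwards [self_mem_nhdsWithin] with t ht
  apply H
  rw [L_shift, hx, L_single, zero_add]
  exact mul_ne_zero ht (by simpa using hi0)

/-- If the kernel of one linear form is contained in that of another, they are
proportional. -/
lemma functional_lemma {a b : Fin d → ℂ} (ha : a ≠ 0)
    (H : ∀ x : Fin d → ℂ, (∑ i, a i * x i) = 0 → (∑ i, b i * x i) = 0) : ∃ c : ℂ, b = c • a := by
  obtain ⟨i0, hi0⟩ := Function.ne_iff.mp ha
  simp only [Pi.zero_apply] at hi0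
  refine ⟨b i0 / a i0, funext fun j => ?_⟩
  have hx : (∑ i, a i * ((Pi.single j 1 : Fin d → ℂ) + (-(a j / a i0)) • (Pi.single i0 1 : Fin d → ℂ)) i) = 0 := by
    rw [L_shift, L_single, L_single, neg_mul, div_mul_cancel₀ _ hi0, add_neg_cancel]
  have h2 := H _ hx
  rw [L_shift, L_single, L_single] at h2
  have hbj : b j = (a j / a i0) * b i0 := by linear_combination h2
  rw [hbj]
  simp only [Pi.smul_apply, smul_eq_mul]
  ring

/-- The key lemma: any two relations are proportional. -/
lemma key {f g : (Fin d → ℂ) → ℂ} (hf : Continuous f) (hg : Continuous g)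
    (hind : ∀ c₁ c₂ : ℂ, c₁ • f + c₂ • g = 0 → c₁ = 0 ∧ c₂ = 0)
    (u v : (Fin d → ℂ) × (Fin d → ℂ))
    (hu : ∀ x, (∑ i, u.1 i * x i) * f x + (∑ i, u.2 i * x i) * g x = 0)
    (hv : ∀ x, (∑ i, v.1 i * x i) * f x + (∑ i, v.2 i * x i) * g x = 0)
    (hu0 : u ≠ 0) : ∃ c : ℂ, v = c • u := by
  -- g is not identically zero
  have hgnz : g ≠ 0 := fun h0 => by
    have := (hind 0 1 (by rw [h0]; simp)).2; norm_num at this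
  have hfnz : f ≠ 0 := fun h0 => by
    have := (hind 1 0 (by rw [h0]; simp)).1; norm_num at this
  -- a relation with vanishing first component vanishes
  have hA : ∀ a b : Fin d → ℂ,
      (∀ x, (∑ i, a i * x i) * f x + (∑ i, b i * x i) * g x = 0) → a = 0 → b = 0 := by
    intro a b hab ha0
    by_contra hb0
    apply hgnz
    funext x
    refine lin_density hb0 hg (fun y hy => ?_) x
    have := hab y
    rw [ha0] at this
    simp only [Pi.zero_apply, zero_mul, Finset.sum_const_zero, zero_mul, zero_add] at this
    exact (mul_eq_zero.mp this).resolve_left hy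
  have hB : ∀ a b : Fin d → ℂ,
      (∀ x, (∑ i, a i * x i) * f x + (∑ i, b i * x i) * g x = 0) → b = 0 → a = 0 := by
    intro a b hab hb0
    by_contra ha0
    apply hfnz
    funext x
    refine lin_density ha0 hf (fun y hy => ?_) x
    have := hab y
    rw [hb0] at this
    simp only [Pi.zero_apply, zero_mul, Finset.sum_const_zero, zero_mul, add_zero] at this
    exact (mul_eq_zero.mp this).resolve_left hy
  have ha1 : u.1 ≠ 0 := by
    intro h0
    exact hu0 (Prod.ext h0 (hA u.1 u.2 hu h0))
  by_cases hc : ∃ c : ℂ, v.1 = c • u.1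
  · obtain ⟨c, hc⟩ := hc
    refine ⟨c, Prod.ext hc ?_⟩
    have hrel : ∀ x, (∑ i, (v.1 - c • u.1) i * x i) * f x
        + (∑ i, (v.2 - c • u.2) i * x i) * g x = 0 := by
      intro x
      have e1 : ∑ i, (v.1 - c • u.1) i * x i
          = (∑ i, v.1 i * x i) - c * ∑ i, u.1 i * x i := by
        rw [Finset.mul_sum, ← Finset.sum_sub_distrib]
        exact Finset.sum_congr rfl fun i _ => by
          simp only [Pi.sub_apply, Pi.smul_apply, smul_eq_mul]; ring
      have e2 : ∑ i, (v.2 - c • u.2) i * x i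
          = (∑ i, v.2 i * x i) - c * ∑ i, u.2 i * x i := by
        rw [Finset.mul_sum, ← Finset.sum_sub_distrib]
        exact Finset.sum_congr rfl fun i _ => by
          simp only [Pi.sub_apply, Pi.smul_apply, smul_eq_mul]; ring
      rw [e1, e2]
      linear_combination hv x - c * hu x
    have h10 : v.1 - c • u.1 = 0 := by rw [hc]; simp
    have h20 := hA _ _ hrel h10
    rw [sub_eq_zero] at h20
    exact h20
  · exfalso
    -- q x := L u.1 x * L v.2 x - L v.1 x * L u.2 x kills f and g
    set q : (Fin d → ℂ) → ℂ :=
      fun x => (∑ i, u.1 i * x i) * (∑ i, v.2 i * x i)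
        - (∑ i, v.1 i * x i) * (∑ i, u.2 i * x i) with hqdef
    have hqf : ∀ x, q x * f x = 0 := by
      intro x
      simp only [hqdef]
      linear_combination (∑ i, v.2 i * x i) * hu x - (∑ i, u.2 i * x i) * hv x
    by_cases hq0 : ∀ x, q x = 0
    · -- Case B: q ≡ 0; deduce u.2 proportional to u.1, contradiction with independence
      have hnw : ∃ w : Fin d → ℂ, (∑ i, u.1 i * w i) = 0 ∧ (∑ i, v.1 i * w i) ≠ 0 := by
        by_contra hno
        push_neg at hno
        exact hc (functional_lemma ha1 hno)
      obtain ⟨w, hw1, hw2⟩ := hnw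
      have hprop : ∀ x : Fin d → ℂ, (∑ i, u.1 i * x i) = 0 → (∑ i, u.2 i * x i) = 0 := by
        intro x hx
        have hval : ∀ t : ℂ, ((∑ i, v.1 i * x i) + t * (∑ i, v.1 i * w i))
            * ((∑ i, u.2 i * x i) + t * (∑ i, u.2 i * w i)) = 0 := by
          intro t
          have := hq0 (x + t • w)
          simp only [hqdef] at this
          rw [L_shift, L_shift, L_shift, L_shift, hx, hw1] at this
          linear_combination -this
        set t0 : ℂ := -(∑ i, v.1 i * x i) / (∑ i, v.1 i * w i) with ht0
        have hval1 : (∑ i, u.2 i * x i) + (t0 + 1) * (∑ i, u.2 i * w i) = 0 := by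
          have h := hval (t0 + 1)
          have heq : (∑ i, v.1 i * x i) + (t0 + 1) * (∑ i, v.1 i * w i)
              = (∑ i, v.1 i * w i) := by
            rw [ht0]; field_simp; ring
          rw [heq] at h
          exact (mul_eq_zero.mp h).resolve_left hw2
        have hval2 : (∑ i, u.2 i * x i) + (t0 + 2) * (∑ i, u.2 i * w i) = 0 := by
          have h := hval (t0 + 2)
          have heq : (∑ i, v.1 i * x i) + (t0 + 2) * (∑ i, v.1 i * w i)
              = 2 * (∑ i, v.1 i * w i) := by
            rw [ht0]; field_simp
            try ring
          rw [heq] at h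
          exact (mul_eq_zero.mp h).resolve_left (mul_ne_zero two_ne_zero hw2)
        have hw0 : (∑ i, u.2 i * w i) = 0 := by linear_combination hval2 - hval1
        linear_combination hval1 - (t0 + 1) * hw0
      obtain ⟨lam, hlam⟩ := functional_lemma ha1 hprop
      have hzero : ∀ x, (∑ i, u.1 i * x i) ≠ 0 → f x + lam * g x = 0 := by
        intro x hx
        have := hu x
        rw [hlam] at this
        have e : ∑ i, (lam • u.1) i * x i = lam * ∑ i, u.1 i * x i := by
          rw [Finset.mul_sum]
          exact Finset.sum_congr rfl fun i _ => by
            simp only [Pi.smul_apply, smul_eq_mul]; ring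
        rw [e] at this
        have : (∑ i, u.1 i * x i) * (f x + lam * g x) = 0 := by linear_combination this
        exact (mul_eq_zero.mp this).resolve_left hx
      have hfg : (1:ℂ) • f + lam • g = 0 := by
        funext x
        have := lin_density ha1 (hf.add (continuous_const.mul hg) : Continuous fun x => f x + lam * g x) hzero x
        simpa using this
      exact one_ne_zero (hind 1 lam hfg).1
    · -- Case A: q ≠ 0 somewhere; deduce f ≡ 0
      push_neg at hq0
      obtain ⟨x₀, hx₀⟩ := hq0
      apply hfnz
      funext x
      show f x = 0
      by_cases hqx : q x ≠ 0
      · exact (mul_eq_zero.mp (hqf x)).resolve_left hqx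
      push_neg at hqx
      simp only [hqdef] at hqx
      obtain ⟨B, C, hq_line, hsum⟩ : ∃ B C : ℂ,
          (∀ t : ℂ, q (x + t • (x₀ - x)) = t * (B + C * t)) ∧ q x₀ = B + C := by
        refine ⟨(∑ i, u.1 i * x i) * (∑ i, v.2 i * (x₀ - x) i)
            + (∑ i, u.1 i * (x₀ - x) i) * (∑ i, v.2 i * x i)
            - (∑ i, v.1 i * x i) * (∑ i, u.2 i * (x₀ - x) i)
            - (∑ i, v.1 i * (x₀ - x) i) * (∑ i, u.2 i * x i),
          (∑ i, u.1 i * (x₀ - x) i) * (∑ i, v.2 i * (x₀ - x) i)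
            - (∑ i, v.1 i * (x₀ - x) i) * (∑ i, u.2 i * (x₀ - x) i), ?_, ?_⟩
        · intro t
          simp only [hqdef]
          rw [L_shift, L_shift, L_shift, L_shift]
          linear_combination hqx
        · have hx01 : x + (1:ℂ) • (x₀ - x) = x₀ := by rw [one_smul]; ring
          have := congrArg q hx01
          rw [show q (x + (1:ℂ) • (x₀ - x)) = 1 * ((∑ i, u.1 i * x i) * (∑ i, v.2 i * (x₀ - x) i)
            + (∑ i, u.1 i * (x₀ - x) i) * (∑ i, v.2 i * x i)
            - (∑ i, v.1 i * x i) * (∑ i, u.2 i * (x₀ - x) i)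
            - (∑ i, v.1 i * (x₀ - x) i) * (∑ i, u.2 i * x i)
            + ((∑ i, u.1 i * (x₀ - x) i) * (∑ i, v.2 i * (x₀ - x) i)
            - (∑ i, v.1 i * (x₀ - x) i) * (∑ i, u.2 i * (x₀ - x) i)) * 1) from ?_] at this
          · rw [← this]; ring
          · simp only [hqdef]
            rw [L_shift, L_shift, L_shift, L_shift]
            linear_combination hqx
      have hBC : B + C ≠ 0 := by rw [← hsum]; exact hx₀
      have hev : ∀ᶠ t in 𝓝[≠] (0:ℂ), q (x + t • (x₀ - x)) ≠ 0 := by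
        by_cases hBne : B ≠ 0
        · have h1 : ∀ᶠ t in 𝓝 (0:ℂ), B + C * t ≠ 0 := by
            have ht : Filter.Tendsto (fun t : ℂ => B + C * t) (𝓝 0) (𝓝 B) := by
              have h0 : Continuous (fun t : ℂ => B + C * t) :=
                continuous_const.add (continuous_const.mul continuous_id)
              simpa using h0.tendsto 0
            exact ht.eventually_ne hBne
          filter_upwards [h1.filter_mono nhdsWithin_le_nhds, self_mem_nhdsWithin] with t h1t h2t
          rw [hq_line]
          exact mul_ne_zero h2t h1t
        · push_neg at hBne
          have hCne : C ≠ 0 := fun h => hBC (by rw [hBne, h, add_zero])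
          filter_upwards [self_mem_nhdsWithin] with t ht
          rw [hq_line, hBne, zero_add]
          exact mul_ne_zero ht (mul_ne_zero hCne ht)
      refine limit_zero hf x (x₀ - x) ?_
      filter_upwards [hev] with t ht
      exact (mul_eq_zero.mp (hqf (x + t • (x₀ - x)))).resolve_left ht


/-- The bilinear relation map. -/
noncomputable def pairMap (d : ℕ) (f g : (Fin d → ℂ) → ℂ) :
    ((Fin d → ℂ) × (Fin d → ℂ)) →ₗ[ℂ] ((Fin d → ℂ) → ℂ) where
  toFun p := fun x => (∑ i, p.1 i * x i) * f x + (∑ i, p.2 i * x i) * g x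
  map_add' p q := by
    funext x
    have e1 : ∑ i, (p + q).1 i * x i = (∑ i, p.1 i * x i) + ∑ i, q.1 i * x i := by
      rw [← Finset.sum_add_distrib]
      exact Finset.sum_congr rfl fun i _ => by
        simp only [Prod.fst_add, Pi.add_apply]; ring
    have e2 : ∑ i, (p + q).2 i * x i = (∑ i, p.2 i * x i) + ∑ i, q.2 i * x i := by
      rw [← Finset.sum_add_distrib]
      exact Finset.sum_congr rfl fun i _ => by
        simp only [Prod.snd_add, Pi.add_apply]; ring
    simp only [e1, e2, Pi.add_apply]
    ring
  map_smul' c p := by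
    funext x
    have e1 : ∑ i, (c • p).1 i * x i = c * ∑ i, p.1 i * x i := by
      rw [Finset.mul_sum]
      exact Finset.sum_congr rfl fun i _ => by
        simp only [Prod.smul_fst, Pi.smul_apply, smul_eq_mul]; ring
    have e2 : ∑ i, (c • p).2 i * x i = c * ∑ i, p.2 i * x i := by
      rw [Finset.mul_sum]
      exact Finset.sum_congr rfl fun i _ => by
        simp only [Prod.smul_snd, Pi.smul_apply, smul_eq_mul]; ring
    simp only [e1, e2, RingHom.id_apply, Pi.smul_apply, smul_eq_mul]
    ring

end Stmt1Aux

open Stmt1Aux in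
/-- continuous `φ₁, ..., φ_d : ℂ^d → ℂ`, not all vanishing on any open set,
with `∑ i, x i * φ i x = 0` identically; if `span φ` has dimension at least 2 then the
span of the functions `x ↦ x i * φ j x` has dimension at least `2d - 1`. -/
theorem stmt1 (d : ℕ) (hd : 1 ≤ d) (φ : Fin d → (Fin d → ℂ) → ℂ)
    (hcont : ∀ j, Continuous (φ j))
    (hnz : ∀ O : Set (Fin d → ℂ), IsOpen O → O.Nonempty → ∃ x ∈ O, ∃ j, φ j x ≠ 0)
    (horth : ∀ x, ∑ i, x i * φ i x = 0)
    (hspan : 2 ≤ Module.finrank ℂ (Submodule.span ℂ (Set.range φ))) :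
    2 * d - 1 ≤ Module.finrank ℂ (Submodule.span ℂ
      {f : (Fin d → ℂ) → ℂ | ∃ (i : Fin d) (j : Fin d), f = fun x => x i * φ j x}) := by
  classical
  set S : Set ((Fin d → ℂ) → ℂ) :=
    {f : (Fin d → ℂ) → ℂ | ∃ (i : Fin d) (j : Fin d), f = fun x => x i * φ j x} with hSdef
  obtain ⟨t, hts, htspan, htli⟩ := exists_linearIndependent ℂ (Set.range φ)
  rw [← htspan] at hspan
  have hnt : t.Nontrivial := by
    by_contra hsub
    rw [Set.not_nontrivial_iff] at hsub
    rcases hsub.eq_empty_or_singleton with h | ⟨y, h⟩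
    · rw [h, Submodule.span_empty] at hspan
      simp only [finrank_bot] at hspan
      omega
    · rw [h] at hspan
      by_cases hy : y = 0
      · rw [hy, Submodule.span_zero_singleton] at hspan
        simp only [finrank_bot] at hspan
        omega
      · rw [finrank_span_singleton hy] at hspan
        omega
  obtain ⟨F, hF, G, hG, hFG⟩ := hnt
  obtain ⟨a, ha⟩ := hts hF
  obtain ⟨b, hb⟩ := hts hG
  have hpair : LinearIndependent ℂ ![F, G] := by
    have e : Fin 2 → t := ![⟨F, hF⟩, ⟨G, hG⟩]
    have hinj : Function.Injective (![(⟨F, hF⟩ : t), ⟨G, hG⟩]) := by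
      intro i j hij
      fin_cases i <;> fin_cases j <;> simp_all <;>
        exact absurd (congrArg Subtype.val hij) (by simp [hFG, hFG.symm])
    have := htli.comp _ hinj
    have heq : ((↑) : t → ((Fin d → ℂ) → ℂ)) ∘ ![(⟨F, hF⟩ : t), ⟨G, hG⟩] = ![F, G] := by
      funext i; fin_cases i <;> rfl
    rwa [heq] at this
  have hind := LinearIndependent.pair_iff.mp hpair
  have hcf : Continuous F := ha ▸ hcont a
  have hcg : Continuous G := hb ▸ hcont b
  set T := pairMap d F G with hTdef
  -- kernel has dimension at most 1
  have hker : Module.finrank ℂ (LinearMap.ker T) ≤ 1 := by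
    by_cases hbot : LinearMap.ker T = ⊥
    · rw [hbot, finrank_bot]
      omega
    · have hbot' : LinearMap.ker T ≠ ⊥ := hbot
      rw [Submodule.ne_bot_iff] at hbot'
      obtain ⟨u, hu_mem, hu0⟩ := hbot'
      have hrel : ∀ w : (Fin d → ℂ) × (Fin d → ℂ), w ∈ LinearMap.ker T →
          ∀ x, (∑ i, w.1 i * x i) * F x + (∑ i, w.2 i * x i) * G x = 0 := by
        intro w hw x
        have := congrFun (LinearMap.mem_ker.mp hw) x
        simpa [hTdef, pairMap] using this
      have hle : LinearMap.ker T ≤ Submodule.span ℂ {u} := by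
        intro v hv
        obtain ⟨c, hc⟩ := key hcf hcg hind u v (hrel u hu_mem) (hrel v hv) hu0
        rw [Submodule.mem_span_singleton]
        exact ⟨c, hc.symm⟩
      haveI := FiniteDimensional.span_of_finite ℂ (Set.finite_singleton u)
      calc Module.finrank ℂ (LinearMap.ker T) ≤
          Module.finrank ℂ (Submodule.span ℂ {u}) := Submodule.finrank_mono hle
        _ = 1 := finrank_span_singleton hu0
  -- range is contained in the span of S
  have hrange : LinearMap.range T ≤ Submodule.span ℂ S := by
    rintro _ ⟨p, rfl⟩
    have heq : T p = (∑ i, p.1 i • (fun x : Fin d → ℂ => x i * φ a x))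
        + (∑ i, p.2 i • (fun x : Fin d → ℂ => x i * φ b x)) := by
      funext x
      simp only [hTdef, pairMap, LinearMap.coe_mk, AddHom.coe_mk, Pi.add_apply,
        Finset.sum_apply, Pi.smul_apply, smul_eq_mul]
      rw [Finset.sum_mul, Finset.sum_mul]
      rw [ha, hb]
      congr 1 <;> exact Finset.sum_congr rfl fun i _ => by ring
    rw [heq]
    refine Submodule.add_mem _ ?_ ?_
    · exact Submodule.sum_mem _ fun i _ => Submodule.smul_mem _ _
        (Submodule.subset_span ⟨i, a, rfl⟩)
    · exact Submodule.sum_mem _ fun i _ => Submodule.smul_mem _ _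
        (Submodule.subset_span ⟨i, b, rfl⟩)
  have hSfin : S.Finite := by
    apply Set.Finite.subset (Set.finite_range
      (fun p : Fin d × Fin d => fun x : Fin d → ℂ => x p.1 * φ p.2 x))
    rintro f ⟨i, j, rfl⟩
    exact ⟨(i, j), rfl⟩
  haveI := FiniteDimensional.span_of_finite ℂ hSfin
  have h1 : Module.finrank ℂ (LinearMap.range T) ≤ Module.finrank ℂ (Submodule.span ℂ S) :=
    Submodule.finrank_mono hrange
  have h2 := LinearMap.finrank_range_add_finrank_ker T
  rw [Module.finrank_prod, Module.finrank_fintype_fun_eq_card, Fintype.card_fin] at h2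
  omega
end

section
/- Let x₁, ..., x₅ ∈ ℂ³ and y₁, ..., y₅ ∈ ℂ³ be such that for every choice of three distinct indices i, j, k ∈ {1,...,5}, the vectors x_i, x_j, x_k are linearly independent and the vectors y_i, y_j, y_k are linearly independent. Then the five matrices x_i ⊗ y_i ∈ Mat_{3×3}(ℂ) (i = 1, ..., 5) are linearly independent. -/
open Matrix

private noncomputable def rmulLin (v : Fin 3 → ℂ) : Matrix (Fin 3) (Fin 3) ℂ →ₗ[ℂ] (Fin 3 → ℂ) where
  toFun M := M *ᵥ v
  map_add' A B := Matrix.add_mulVec A B v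
  map_smul' a A := Matrix.smul_mulVec a A v

private lemma vmv_mulVec (a b v : Fin 3 → ℂ) :
    Matrix.vecMulVec a b *ᵥ v = (b ⬝ᵥ v) • a := by
  funext i
  simp [Matrix.mulVec, Matrix.vecMulVec_apply, dotProduct, Finset.mul_sum, Finset.sum_mul]
  ring_nf

private lemma det_ne_triple {a b c : Fin 3 → ℂ} (h : LinearIndependent ℂ ![a, b, c]) :
    a ⬝ᵥ (crossProduct b c) ≠ 0 := by
  rw [triple_product_eq_det]
  have : LinearIndependent ℂ (fun i => (Matrix.of ![a, b, c]) i) := h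
  have hu : IsUnit (Matrix.of ![a, b, c]) :=
    Matrix.linearIndependent_rows_iff_isUnit.mp this
  have := (Matrix.isUnit_iff_isUnit_det _).mp hu
  exact this.ne_zero

private lemma solve3 {a b c : Fin 3 → ℂ} (h : LinearIndependent ℂ ![a, b, c])
    (p q r : ℂ) (hsum : p • a + q • b + r • c = 0) : p = 0 ∧ q = 0 ∧ r = 0 := by
  have h' := Fintype.linearIndependent_iff.mp h ![p, q, r] (by
    simp [Fin.sum_univ_three]
    exact hsum)
  exact ⟨h' 0, h' 1, h' 2⟩

/-- if every three of `x₁, ..., x₅ ∈ ℂ³` are linearly independent and every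
three of `y₁, ..., y₅ ∈ ℂ³` are linearly independent, then the five rank-one matrices
`x_i ⊗ y_i` are linearly independent in `Mat₃ₓ₃(ℂ)`. -/
theorem stmt3 (x y : Fin 5 → Fin 3 → ℂ)
    (hx : ∀ i j k : Fin 5, i ≠ j → i ≠ k → j ≠ k → LinearIndependent ℂ ![x i, x j, x k])
    (hy : ∀ i j k : Fin 5, i ≠ j → i ≠ k → j ≠ k → LinearIndependent ℂ ![y i, y j, y k]) :
    LinearIndependent ℂ (fun i : Fin 5 => Matrix.vecMulVec (x i) (y i)) := by
  rw [Fintype.linearIndependent_iff]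
  intro c hc
  have key : ∀ v : Fin 3 → ℂ, ∑ i : Fin 5, (c i * (y i ⬝ᵥ v)) • x i = 0 := by
    intro v
    have h1 := congrArg (rmulLin v) hc
    rw [map_sum, map_zero] at h1
    simpa [rmulLin, Matrix.smul_mulVec, vmv_mulVec, smul_smul] using h1
  -- first: kill indices 3, 4
  have h034 : ∀ i : Fin 5, i = 0 ∨ i = 1 ∨ i = 2 → c i = 0 := by
    intro i hi
    have hv := key (crossProduct (y 3) (y 4))
    rw [Fin.sum_univ_five] at hv
    rw [dot_self_cross, dot_cross_self] at hv
    simp only [mul_zero, zero_smul, add_zero] at hv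
    obtain ⟨h0, h1, h2⟩ := solve3 (hx 0 1 2 (by decide) (by decide) (by decide))
      _ _ _ hv
    have d0 := det_ne_triple (hy 0 3 4 (by decide) (by decide) (by decide))
    have d1 := det_ne_triple (hy 1 3 4 (by decide) (by decide) (by decide))
    have d2 := det_ne_triple (hy 2 3 4 (by decide) (by decide) (by decide))
    rcases hi with rfl | rfl | rfl
    · exact (mul_eq_zero.mp h0).resolve_right d0
    · exact (mul_eq_zero.mp h1).resolve_right d1
    · exact (mul_eq_zero.mp h2).resolve_right d2
  have h234 : ∀ i : Fin 5, i = 3 ∨ i = 4 → c i = 0 := by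
    intro i hi
    have hv := key (crossProduct (y 0) (y 1))
    rw [Fin.sum_univ_five] at hv
    rw [dot_self_cross, dot_cross_self] at hv
    simp only [mul_zero, zero_smul, zero_add] at hv
    obtain ⟨h2, h3, h4⟩ := solve3 (hx 2 3 4 (by decide) (by decide) (by decide))
      _ _ _ hv
    have d3 := det_ne_triple (hy 3 0 1 (by decide) (by decide) (by decide))
    have d4 := det_ne_triple (hy 4 0 1 (by decide) (by decide) (by decide))
    rcases hi with rfl | rfl
    · exact (mul_eq_zero.mp h3).resolve_right d3
    · exact (mul_eq_zero.mp h4).resolve_right d4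
  intro i
  fin_cases i
  · exact h034 0 (by tauto)
  · exact h034 1 (by tauto)
  · exact h034 2 (by tauto)
  · exact h234 3 (by tauto)
  · exact h234 4 (by tauto)
end

section
/- Let d ≥ 3 and let x, y ∈ ℂ^d be nonzero orthogonal vectors (with respect to the Hermitian inner product). Let S_{x,y} be the intersection, over all pairs of orthogonal subspaces E₊, E₋ of ℂ^d with dim E₊ = d₊ ≥ 2, dim E₋ = d₋ ≥ 2, d₋ < d - 1, x ∈ E₊ and y ∈ E₋, of the spaces E₊ ⊗ E₋ (viewed as subspaces of Mat_{d×d}(ℂ) via rank-considerations: E₊ ⊗ E₋ = span of u ⊗ v with u ∈ E₊, v ∈ E₋). Then S_{x,y} is exactly the one-dimensional space spanned by x ⊗ y. -/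
open Submodule Module Finset

lemma stmt4_rows_cols {d : ℕ} (E F : Submodule ℂ (Fin d → ℂ)) (M : Matrix (Fin d) (Fin d) ℂ)
    (hM : M ∈ Submodule.span ℂ
      {M : Matrix (Fin d) (Fin d) ℂ | ∃ u ∈ E, ∃ v ∈ F, M = Matrix.vecMulVec u v}) :
    (∀ i, M i ∈ F) ∧ ∀ j, (fun i => M i j) ∈ E := by
  induction hM using Submodule.span_induction with
  | mem N hN =>
    obtain ⟨u, hu, v, hv, rfl⟩ := hN
    constructor
    · intro i
      have h : Matrix.vecMulVec u v i = u i • v := by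
        funext j; simp [Matrix.vecMulVec_apply]
      rw [h]; exact F.smul_mem _ hv
    · intro j
      have h : (fun i => Matrix.vecMulVec u v i j) = v j • u := by
        funext i; simp [Matrix.vecMulVec_apply, mul_comm]
      rw [h]; exact E.smul_mem _ hu
  | zero => exact ⟨fun i => F.zero_mem, fun j => E.zero_mem⟩
  | add A B _ _ hA hB =>
      exact ⟨fun i => F.add_mem (hA.1 i) (hB.1 i), fun j => E.add_mem (hA.2 j) (hB.2 j)⟩
  | smul c A _ hA =>
      exact ⟨fun i => F.smul_mem c (hA.1 i), fun j => E.smul_mem c (hA.2 j)⟩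

/-- for nonzero orthogonal `x, y ∈ ℂ^d`, the intersection of the spaces
`E₊ ⊗ E₋ ⊆ Mat_{d×d}(ℂ)` over all pairs of orthogonal subspaces `E₊, E₋` with
`dim E₊ = d₊ ≥ 2`, `dim E₋ = d₋ ≥ 2`, `d₋ < d - 1`, `x ∈ E₊`, `y ∈ E₋` is exactly
the line spanned by `x ⊗ y`. -/
theorem stmt4 (d dp dm : ℕ) (hd : 3 ≤ d) (hdp : 2 ≤ dp) (hdm : 2 ≤ dm)
    (hdm' : dm < d - 1) (hsum : dp + dm ≤ d)
    (x y : Fin d → ℂ) (hx : x ≠ 0) (hy : y ≠ 0)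
    (hxy : dotProduct (star x) y = 0) :
    sInf {S : Submodule ℂ (Matrix (Fin d) (Fin d) ℂ) |
        ∃ E F : Submodule ℂ (Fin d → ℂ),
          Module.finrank ℂ E = dp ∧ Module.finrank ℂ F = dm ∧
          (∀ u ∈ E, ∀ v ∈ F, dotProduct (star u) v = 0) ∧
          x ∈ E ∧ y ∈ F ∧
          S = Submodule.span ℂ
            {M : Matrix (Fin d) (Fin d) ℂ | ∃ u ∈ E, ∃ v ∈ F, M = Matrix.vecMulVec u v}}
      = Submodule.span ℂ {Matrix.vecMulVec x y} := by
  classical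
  let i0 : Fin d := ⟨0, by omega⟩
  let i1 : Fin d := ⟨1, by omega⟩
  have h01 : i0 ≠ i1 := by simp [i0, i1, Fin.ext_iff]
  let xe : EuclideanSpace ℂ (Fin d) := WithLp.toLp 2 x
  let ye : EuclideanSpace ℂ (Fin d) := WithLp.toLp 2 y
  have hnx : ‖xe‖ ≠ 0 := norm_ne_zero_iff.2 (by
    intro h; apply hx; have := congrArg WithLp.ofLp h; simpa [xe] using this)
  have hny : ‖ye‖ ≠ 0 := norm_ne_zero_iff.2 (by
    intro h; apply hy; have := congrArg WithLp.ofLp h; simpa [ye] using this)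
  let xh : EuclideanSpace ℂ (Fin d) := (‖xe‖ : ℂ)⁻¹ • xe
  let yh : EuclideanSpace ℂ (Fin d) := (‖ye‖ : ℂ)⁻¹ • ye
  have hinner : ∀ u v : Fin d → ℂ,
      (inner (𝕜 := ℂ) (E := EuclideanSpace ℂ (Fin d)) (WithLp.toLp 2 u) (WithLp.toLp 2 v))
        = dotProduct (star u) v := by
    intro u v
    simp [PiLp.inner_apply, dotProduct, RCLike.inner_apply, mul_comm]
  have hxy' : inner (𝕜 := ℂ) xe ye = 0 := (hinner x y).trans hxy
  have hxhn : ‖xh‖ = 1 := by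
    simp only [xh, norm_smul, norm_inv, Complex.norm_real, Real.norm_eq_abs,
      abs_of_nonneg (norm_nonneg xe)]
    exact inv_mul_cancel₀ hnx
  have hyhn : ‖yh‖ = 1 := by
    simp only [yh, norm_smul, norm_inv, Complex.norm_real, Real.norm_eq_abs,
      abs_of_nonneg (norm_nonneg ye)]
    exact inv_mul_cancel₀ hny
  have hxyh : inner (𝕜 := ℂ) xh yh = 0 := by
    simp [xh, yh, inner_smul_left, inner_smul_right, hxy']
  -- orthonormal pair
  let vfun : Fin d → EuclideanSpace ℂ (Fin d) := fun i => if i = i0 then xh else yh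
  have hvo : Orthonormal ℂ (({i0, i1} : Set (Fin d)).restrict vfun) := by
    have hxx : inner (𝕜 := ℂ) xh xh = 1 := by
      rw [inner_self_eq_norm_sq_to_K, hxhn]; norm_num
    have hyy : inner (𝕜 := ℂ) yh yh = 1 := by
      rw [inner_self_eq_norm_sq_to_K, hyhn]; norm_num
    have hyx : inner (𝕜 := ℂ) yh xh = 0 := by
      rw [← inner_conj_symm, hxyh, map_zero]
    rw [orthonormal_iff_ite]
    rintro ⟨i, hi⟩ ⟨j, hj⟩
    simp only [Set.mem_insert_iff, Set.mem_singleton_iff] at hi hj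
    rcases hi with rfl | rfl <;> rcases hj with rfl | rfl <;>
      simp [Set.restrict, vfun, h01, h01.symm, Subtype.mk.injEq, hxx, hyy, hxyh, hyx, hxhn, hyhn]
  obtain ⟨b, hb⟩ := hvo.exists_orthonormalBasis_extension_of_card_eq
    (by simp [finrank_euclideanSpace])
  have hb0 : b i0 = xh := by
    have h := hb i0 (by simp)
    rw [h]; simp [vfun]
  have hb1 : b i1 = yh := by
    have h := hb i1 (by simp)
    rw [h]; simp [vfun, h01.symm]
  -- spans of subsets of the basis
  let sub : Finset (Fin d) → Submodule ℂ (Fin d → ℂ) :=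
    fun I => (Submodule.span ℂ (↑(I.image b) : Set (EuclideanSpace ℂ (Fin d)))).map
      (WithLp.linearEquiv 2 ℂ (Fin d → ℂ) : EuclideanSpace ℂ (Fin d) →ₗ[ℂ] (Fin d → ℂ))
  have hbinj : Function.Injective b := b.orthonormal.linearIndependent.injective
  have hrank : ∀ I : Finset (Fin d), finrank ℂ (sub I) = I.card := by
    intro I
    have hli : LinearIndependent ℂ
        ((↑) : (↑(I.image b) : Set (EuclideanSpace ℂ (Fin d))) → EuclideanSpace ℂ (Fin d)) := by
      refine ((linearIndepOn_id_range_iff hbinj).2 b.orthonormal.linearIndependent).mono ?_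
      intro z hz
      simp only [Finset.coe_image] at hz
      exact Set.image_subset_range b I hz
    have h1 := finrank_span_finset_eq_card (s := I.image b) hli
    have h2 : (I.image b).card = I.card := Finset.card_image_of_injective _ hbinj
    show finrank ℂ ((Submodule.span ℂ (↑(I.image b) : Set (EuclideanSpace ℂ (Fin d)))).map
      (WithLp.linearEquiv 2 ℂ (Fin d → ℂ) : EuclideanSpace ℂ (Fin d) →ₗ[ℂ] (Fin d → ℂ))) = I.card
    rw [LinearEquiv.finrank_map_eq]
    exact h2 ▸ h1
  have hbmem : ∀ (k : Fin d) (I : Finset (Fin d)), k ∈ I → WithLp.ofLp (b k) ∈ sub I := by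
    intro k I hk
    exact Submodule.mem_map_of_mem (f := (WithLp.linearEquiv 2 ℂ (Fin d → ℂ) : EuclideanSpace ℂ (Fin d) →ₗ[ℂ] (Fin d → ℂ))) <| Submodule.subset_span (by
      simp only [Finset.coe_image, Set.mem_image, Finset.mem_coe]
      exact ⟨k, hk, rfl⟩)
  have horth : ∀ (I J : Finset (Fin d)), Disjoint I J →
      ∀ u ∈ sub I, ∀ v ∈ sub J,
        inner (𝕜 := ℂ) (E := EuclideanSpace ℂ (Fin d)) (WithLp.toLp 2 u) (WithLp.toLp 2 v) = 0 := by
    intro I J hIJ u hu v hv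
    rw [Submodule.mem_map] at hu hv
    obtain ⟨u, hu, rfl⟩ := hu
    obtain ⟨v, hv, rfl⟩ := hv
    show inner ℂ u v = 0
    have key : ∀ k ∈ I, inner (𝕜 := ℂ) (E := EuclideanSpace ℂ (Fin d)) (b k) v = 0 := by
      intro k hk
      induction hv using Submodule.span_induction with
      | mem w hw =>
        obtain ⟨j, hj, rfl⟩ : ∃ j ∈ J, b j = w := by
          simpa [Finset.coe_image] using hw
        exact b.orthonormal.2 (fun h => (Finset.disjoint_left.1 hIJ hk) (h ▸ hj))
      | zero => exact inner_zero_right _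
      | add a c _ _ ha hc => rw [inner_add_right, ha, hc, add_zero]
      | smul t a _ ha => rw [inner_smul_right, ha, mul_zero]
    induction hu using Submodule.span_induction with
    | mem w hw =>
      obtain ⟨i, hi, rfl⟩ : ∃ i ∈ I, b i = w := by
        simpa [Finset.coe_image] using hw
      exact key i hi
    | zero => exact inner_zero_left _
    | add a c _ _ ha hc => rw [inner_add_left, ha, hc, add_zero]
    | smul t a _ ha => rw [inner_smul_left, ha, mul_zero]
  have hxmem : ∀ I : Finset (Fin d), i0 ∈ I → x ∈ sub I := by
    intro I hI
    have hxe : xe = (‖xe‖ : ℂ) • xh := by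
      rw [show xh = (‖xe‖ : ℂ)⁻¹ • xe from rfl, smul_inv_smul₀ (by exact_mod_cast hnx)]
    have h : xe ∈ Submodule.span ℂ (↑(I.image b) : Set (EuclideanSpace ℂ (Fin d))) := by
      rw [hxe, ← hb0]
      exact Submodule.smul_mem _ _
        (Submodule.subset_span (Finset.mem_coe.2 (Finset.mem_image_of_mem b hI)))
    exact Submodule.mem_map_of_mem (f := (WithLp.linearEquiv 2 ℂ (Fin d → ℂ) : EuclideanSpace ℂ (Fin d) →ₗ[ℂ] (Fin d → ℂ))) h
  have hymem : ∀ J : Finset (Fin d), i1 ∈ J → y ∈ sub J := by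
    intro J hJ
    have hye : ye = (‖ye‖ : ℂ) • yh := by
      rw [show yh = (‖ye‖ : ℂ)⁻¹ • ye from rfl, smul_inv_smul₀ (by exact_mod_cast hny)]
    have h : ye ∈ Submodule.span ℂ (↑(J.image b) : Set (EuclideanSpace ℂ (Fin d))) := by
      rw [hye, ← hb1]
      exact Submodule.smul_mem _ _
        (Submodule.subset_span (Finset.mem_coe.2 (Finset.mem_image_of_mem b hJ)))
    exact Submodule.mem_map_of_mem (f := (WithLp.linearEquiv 2 ℂ (Fin d → ℂ) : EuclideanSpace ℂ (Fin d) →ₗ[ℂ] (Fin d → ℂ))) h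
  -- membership in the defining set
  have hmemset : ∀ I J : Finset (Fin d), i0 ∈ I → i1 ∈ J → Disjoint I J →
      I.card = dp → J.card = dm →
      (Submodule.span ℂ
        {M : Matrix (Fin d) (Fin d) ℂ | ∃ u ∈ sub I, ∃ v ∈ sub J, M = Matrix.vecMulVec u v})
      ∈ {S : Submodule ℂ (Matrix (Fin d) (Fin d) ℂ) |
        ∃ E F : Submodule ℂ (Fin d → ℂ),
          Module.finrank ℂ E = dp ∧ Module.finrank ℂ F = dm ∧
          (∀ u ∈ E, ∀ v ∈ F, dotProduct (star u) v = 0) ∧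
          x ∈ E ∧ y ∈ F ∧
          S = Submodule.span ℂ
            {M : Matrix (Fin d) (Fin d) ℂ | ∃ u ∈ E, ∃ v ∈ F, M = Matrix.vecMulVec u v}} := by
    intro I J hI0 hJ1 hIJ hIc hJc
    refine ⟨sub I, sub J, by rw [hrank, hIc], by rw [hrank, hJc], ?_,
      hxmem I hI0, hymem J hJ1, rfl⟩
    intro u hu v hv
    rw [← hinner]
    exact horth I J hIJ u hu v hv
  apply le_antisymm
  · -- hard direction
    intro M hM
    rw [Submodule.mem_sInf] at hM
    have hpair : ∀ J : Finset (Fin d), i1 ∈ J → i0 ∉ J → J.card = dm →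
        ∃ I : Finset (Fin d), i0 ∈ I ∧ Disjoint I J ∧ I.card = dp := by
      intro J hJ1 hJ0 hJc
      obtain ⟨I, hsubI, hIsub, hIc⟩ := Finset.exists_subsuperset_card_eq
        (s := ({i0} : Finset (Fin d))) (t := Finset.univ \ J) (n := dp)
        (Finset.singleton_subset_iff.2 (by simp [hJ0]))
        (by simp; omega)
        (by rw [Finset.card_sdiff_of_subset (Finset.subset_univ _), Finset.card_univ,
              Fintype.card_fin, hJc]; omega)
      refine ⟨I, hsubI (by simp), ?_, hIc⟩
      rw [Finset.disjoint_left]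
      intro a haI haJ
      have h := hIsub haI
      simp only [Finset.mem_sdiff, Finset.mem_univ, true_and] at h
      exact h haJ
    -- the rows of M are orthogonal to b k for k ≠ i1
    have hrowinner : ∀ k : Fin d, k ≠ i1 → ∀ i,
        inner (𝕜 := ℂ) (E := EuclideanSpace ℂ (Fin d)) (b k) (WithLp.toLp 2 (M i)) = 0 := by
      intro k hk i
      obtain ⟨J, hsubJ, hJsub, hJc⟩ := Finset.exists_subsuperset_card_eq
        (s := ({i1} : Finset (Fin d))) (t := Finset.univ \ {i0, k}) (n := dm)
        (Finset.singleton_subset_iff.2 (by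
          simp only [Finset.mem_sdiff, Finset.mem_univ, true_and, Finset.mem_insert,
            Finset.mem_singleton]
          push_neg
          exact ⟨h01.symm, hk.symm⟩))
        (by simp; omega)
        (by rw [Finset.card_sdiff_of_subset (Finset.subset_univ _), Finset.card_univ, Fintype.card_fin]
            have h2 : ({i0, k} : Finset (Fin d)).card ≤ 2 :=
              (Finset.card_insert_le _ _).trans (by simp)
            omega)
      have hJ1 : i1 ∈ J := hsubJ (by simp)
      have hJ0 : i0 ∉ J := fun h => by simpa using (hJsub h)
      have hkJ : k ∉ J := fun h => by simpa using (hJsub h)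
      obtain ⟨I, hI0, hIJ, hIc⟩ := hpair J hJ1 hJ0 hJc
      have hMS := hM _ (hmemset I J hI0 hJ1 hIJ hIc hJc)
      have hrc := stmt4_rows_cols (sub I) (sub J) M hMS
      exact horth {k} J (by simp [hkJ]) _ (hbmem k {k} (by simp)) _ (hrc.1 i)
    -- the columns of M are orthogonal to b k for k ≠ i0
    have hcolinner : ∀ k : Fin d, k ≠ i0 → ∀ j,
        inner (𝕜 := ℂ) (E := EuclideanSpace ℂ (Fin d)) (b k) (WithLp.toLp 2 (fun i => M i j)) = 0 := by
      intro k hk j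
      obtain ⟨J, hsubJ, hJsub, hJc⟩ := Finset.exists_subsuperset_card_eq
        (s := ({i1, k} : Finset (Fin d))) (t := Finset.univ \ {i0}) (n := dm)
        (by intro a ha
            simp only [Finset.mem_insert, Finset.mem_singleton] at ha
            simp only [Finset.mem_sdiff, Finset.mem_univ, true_and, Finset.mem_singleton]
            rcases ha with rfl | rfl
            · exact h01.symm
            · exact hk)
        ((Finset.card_insert_le _ _).trans (by simp [hdm]))
        (by rw [Finset.card_sdiff_of_subset (Finset.subset_univ _), Finset.card_univ, Fintype.card_fin]
            simp only [Finset.card_singleton]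
            omega)
      have hJ1 : i1 ∈ J := hsubJ (by simp)
      have hJ0 : i0 ∉ J := fun h => by simpa using (hJsub h)
      have hkJ : k ∈ J := hsubJ (by simp)
      obtain ⟨I, hI0, hIJ, hIc⟩ := hpair J hJ1 hJ0 hJc
      have hMS := hM _ (hmemset I J hI0 hJ1 hIJ hIc hJc)
      have hrc := stmt4_rows_cols (sub I) (sub J) M hMS
      have hkI : k ∉ I := Finset.disjoint_left.1 hIJ.symm hkJ
      exact horth {k} I (by simp [hkI]) _ (hbmem k {k} (by simp)) _ (hrc.2 j)
    -- expansion lemma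
    have hexpand : ∀ (w : EuclideanSpace ℂ (Fin d)) (k : Fin d),
        (∀ l, l ≠ k → inner (𝕜 := ℂ) (b l) w = 0) →
        w = (inner (𝕜 := ℂ) (b k) w) • b k := by
      intro w k hw
      have h2 : ∑ l, (inner (𝕜 := ℂ) (b l) w) • b l = (inner (𝕜 := ℂ) (b k) w) • b k :=
        Finset.sum_eq_single k (fun l _ hl => by rw [hw l hl, zero_smul])
          (fun h => absurd (Finset.mem_univ k) h)
      rw [← h2]; exact (b.sum_repr' w).symm
    -- rows are multiples of y
    have hrowy : ∀ i, ∃ c : ℂ, M i = c • y := by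
      intro i
      have h1 : (WithLp.toLp 2 (M i))
          = (inner (𝕜 := ℂ) (b i1) (WithLp.toLp 2 (M i))) • b i1 :=
        hexpand _ i1 (fun l hl => hrowinner l hl i)
      refine ⟨(inner (𝕜 := ℂ) (b i1) (WithLp.toLp 2 (M i))) * (‖ye‖ : ℂ)⁻¹, ?_⟩
      have h2 : (WithLp.toLp 2 (M i))
          = ((inner (𝕜 := ℂ) (b i1) (WithLp.toLp 2 (M i))) * (‖ye‖ : ℂ)⁻¹) • ye := by
        rw [mul_smul, show ((‖ye‖ : ℂ)⁻¹ • ye : EuclideanSpace ℂ (Fin d)) = yh from rfl, ← hb1]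
        exact h1
      have := congrArg WithLp.ofLp h2
      rw [WithLp.ofLp_smul] at this
      exact this
    -- the j0 column is a multiple of x
    obtain ⟨j0, hj0⟩ : ∃ j0, y j0 ≠ 0 := by
      by_contra h
      push_neg at h
      exact hy (funext h)
    have hcolx : ∃ t : ℂ, (fun i => M i j0) = t • x := by
      have h1 : (WithLp.toLp 2 (fun i => M i j0))
          = (inner (𝕜 := ℂ) (b i0) (WithLp.toLp 2 (fun i => M i j0))) • b i0 :=
        hexpand _ i0 (fun l hl => hcolinner l hl j0)
      refine ⟨(inner (𝕜 := ℂ) (b i0) (WithLp.toLp 2 (fun i => M i j0)))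
        * (‖xe‖ : ℂ)⁻¹, ?_⟩
      have h2 : (WithLp.toLp 2 (fun i => M i j0))
          = ((inner (𝕜 := ℂ) (b i0) (WithLp.toLp 2 (fun i => M i j0)))
            * (‖xe‖ : ℂ)⁻¹) • xe := by
        rw [mul_smul, show ((‖xe‖ : ℂ)⁻¹ • xe : EuclideanSpace ℂ (Fin d)) = xh from rfl, ← hb0]
        exact h1
      have := congrArg WithLp.ofLp h2
      rw [WithLp.ofLp_smul] at this
      exact this
    choose c hc using hrowy
    obtain ⟨t, ht⟩ := hcolx
    have hct : ∀ i, c i * y j0 = t * x i := by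
      intro i
      have h1 : M i j0 = c i * y j0 := by rw [hc i]; rfl
      have h2 : M i j0 = t * x i := congrFun ht i
      rw [← h1, h2]
    rw [Submodule.mem_span_singleton]
    refine ⟨t / y j0, ?_⟩
    funext i j
    have h3 : M i j = c i * y j := by rw [hc i]; rfl
    show (t / y j0) * Matrix.vecMulVec x y i j = M i j
    rw [Matrix.vecMulVec_apply, h3]
    field_simp
    linear_combination (-(y j)) * hct i
  · -- easy direction
    rw [Submodule.span_le]
    intro N hN
    simp only [Set.mem_singleton_iff] at hN
    subst hN
    rw [SetLike.mem_coe, Submodule.mem_sInf]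
    intro S hS
    obtain ⟨E, F, _, _, _, hxE, hyF, rfl⟩ := hS
    exact Submodule.subset_span ⟨x, hxE, y, hyF, rfl⟩
end

section
/- Let A ⊆ ℂ be a finite δ-separated set with z₀ ∈ A, t₀ > δ, z₁ ∈ A with |z₀ - z₁| = t₀, and assume |A ∩ B(z₀, t₀)| ≥ t₀^{σ/2}|A| and |A ∩ B(z, t)| ≤ (2t)^{σ/2}|A| for all δ < t ≤ t₀, z ∈ ℂ. Define A₁ = (z₁ - z₀)^{-1}((A - z₀) ∩ B(0, t₀)). Then for all δ/t₀ < t < 1 and z ∈ ℂ, |A₁ ∩ B(z, t)| ≤ (2t)^{σ/2}|A₁|. -/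
/-- rescaling of the non-concentration property.  With
`A₁ = (z₁ - z₀)⁻¹((A - z₀) ∩ B(0,t₀))`, for all `δ/t₀ < t < 1` and `z ∈ ℂ`,
`|A₁ ∩ B(z,t)| ≤ (2t)^{σ/2}|A₁|`. -/
theorem stmt7 (δ σ t₀ : ℝ) (A : Set ℂ) (z₀ z₁ : ℂ)
    (hδ : 0 < δ) (hσ : 0 < σ) (hfin : A.Finite)
    (hsep : A.Pairwise fun a b => δ < dist a b)
    (hz₀ : z₀ ∈ A) (hz₁ : z₁ ∈ A) (ht₀ : δ < t₀) (hdist : dist z₀ z₁ = t₀)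
    (hlarge : t₀ ^ (σ / 2) * (A.ncard : ℝ) ≤ ((A ∩ Metric.closedBall z₀ t₀).ncard : ℝ))
    (hnc : ∀ (z : ℂ) (t : ℝ), δ < t → t ≤ t₀ →
      ((A ∩ Metric.closedBall z t).ncard : ℝ) ≤ (2 * t) ^ (σ / 2) * (A.ncard : ℝ)) :
    ∀ (z : ℂ) (t : ℝ), δ / t₀ < t → t < 1 →
      ((((fun w => (z₁ - z₀)⁻¹ * (w - z₀)) '' (A ∩ Metric.closedBall z₀ t₀)) ∩
          Metric.closedBall z t).ncard : ℝ)
        ≤ (2 * t) ^ (σ / 2) *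
          (((fun w => (z₁ - z₀)⁻¹ * (w - z₀)) '' (A ∩ Metric.closedBall z₀ t₀)).ncard : ℝ) := by
  intro z t ht1 ht2
  have ht₀pos : (0:ℝ) < t₀ := hδ.trans ht₀
  have htpos : 0 < t := lt_of_le_of_lt (div_nonneg hδ.le ht₀pos.le) ht1
  set c : ℂ := z₁ - z₀ with hc
  have habs : ‖c‖ = t₀ := by
    rw [hc, ← Complex.dist_eq, dist_comm]; exact hdist
  have hcne : c ≠ 0 := by
    intro h; rw [h] at habs; simp at habs; linarith
  set f : ℂ → ℂ := fun w => c⁻¹ * (w - z₀) with hf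
  have hinj : Function.Injective f := by
    intro a b h
    have : c⁻¹ ≠ 0 := inv_ne_zero hcne
    replace h : a = b := sub_left_injective (mul_left_cancel₀ this (show c⁻¹ * (a - z₀) = c⁻¹ * (b - z₀) from h))
    exact h
  set S : Set ℂ := A ∩ Metric.closedBall z₀ t₀ with hS
  have hSfin : S.Finite := hfin.inter_of_left _
  -- preimage of ball
  have hpre : f ⁻¹' (Metric.closedBall z t) = Metric.closedBall (z₀ + c * z) (t₀ * t) := by
    ext w
    simp only [Set.mem_preimage, Metric.mem_closedBall, hf, Complex.dist_eq]
    have : c⁻¹ * (w - z₀) - z = c⁻¹ * (w - (z₀ + c * z)) := by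
      field_simp; ring
    rw [this, norm_mul, norm_inv, habs]
    rw [inv_mul_le_iff₀ ht₀pos]
  have himg : (f '' S) ∩ Metric.closedBall z t = f '' (S ∩ f ⁻¹' (Metric.closedBall z t)) := by
    rw [Set.image_inter_preimage]
  have hcard1 : ((f '' S) ∩ Metric.closedBall z t).ncard
      = (S ∩ Metric.closedBall (z₀ + c * z) (t₀ * t)).ncard := by
    rw [himg, hpre, Set.ncard_image_of_injective _ hinj]
  have hsub : S ∩ Metric.closedBall (z₀ + c * z) (t₀ * t)
      ⊆ A ∩ Metric.closedBall (z₀ + c * z) (t₀ * t) :=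
    Set.inter_subset_inter_left _ Set.inter_subset_left
  have hcard2 : ((S ∩ Metric.closedBall (z₀ + c * z) (t₀ * t)).ncard : ℝ)
      ≤ ((A ∩ Metric.closedBall (z₀ + c * z) (t₀ * t)).ncard : ℝ) := by
    exact_mod_cast Set.ncard_le_ncard hsub (hfin.inter_of_left _)
  have hδt : δ < t₀ * t := by
    have := (div_lt_iff₀ ht₀pos).mp ht1
    linarith [this]
  have hle : t₀ * t ≤ t₀ := by nlinarith
  have h3 := hnc (z₀ + c * z) (t₀ * t) hδt hle
  -- combine rpow
  have hrw : (2 * (t₀ * t)) ^ (σ / 2) = (2 * t) ^ (σ / 2) * t₀ ^ (σ / 2) := by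
    rw [show 2 * (t₀ * t) = (2 * t) * t₀ by ring,
      Real.mul_rpow (by positivity) ht₀pos.le]
  have hAcard := hlarge
  have hSc : ((f '' S).ncard : ℝ) = (S.ncard : ℝ) := by
    exact_mod_cast Set.ncard_image_of_injective S hinj
  calc ((((f '' S) ∩ Metric.closedBall z t).ncard : ℝ))
      = ((S ∩ Metric.closedBall (z₀ + c * z) (t₀ * t)).ncard : ℝ) := by rw [hcard1]
    _ ≤ ((A ∩ Metric.closedBall (z₀ + c * z) (t₀ * t)).ncard : ℝ) := hcard2
    _ ≤ (2 * (t₀ * t)) ^ (σ / 2) * (A.ncard : ℝ) := h3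
    _ = (2 * t) ^ (σ / 2) * (t₀ ^ (σ / 2) * (A.ncard : ℝ)) := by rw [hrw]; ring
    _ ≤ (2 * t) ^ (σ / 2) * ((S.ncard : ℝ)) := by
        apply mul_le_mul_of_nonneg_left _ (by positivity)
        exact hAcard
    _ = (2 * t) ^ (σ / 2) * ((f '' S).ncard : ℝ) := by rw [hSc]
end

section
/- Let g_1, ..., g_q ∈ U(d), q ≥ 2, generate a free group, and for ℓ ∈ ℕ, δ > 0 define W_{ℓ,δ} = {x ∈ W_ℓ : ‖x - 1‖ < δ}, where W_ℓ is the set of words of length ≤ ℓ. Assume |W_{ℓ/2}| ≥ c(2q-1)^{ℓ/2}. Then |W_{ℓ,δ}| ≳ δ^{2d²} (2q-1)^{ℓ/2}. -/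
/-- The Frobenius (Hilbert–Schmidt) norm of a complex matrix. -/
noncomputable def matNorm {d : ℕ} (A : Matrix (Fin d) (Fin d) ℂ) : ℝ :=
  Real.sqrt (∑ i, ∑ j, ‖A i j‖ ^ 2)

open scoped Matrix

lemma col_sum {d : ℕ} (B : Matrix (Fin d) (Fin d) ℂ) (j : Fin d) :
    ∑ i, ‖B i j‖ ^ 2 = ((Bᴴ * B) j j).re := by
  rw [Matrix.mul_apply, Complex.re_sum]
  refine Finset.sum_congr rfl fun i _ => ?_
  simp [Matrix.conjTranspose_apply, Complex.sq_norm, Complex.star_def, mul_comm,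
    Complex.mul_conj]

lemma matNorm_unitary_mul {d : ℕ} (u A : Matrix (Fin d) (Fin d) ℂ)
    (hu : u ∈ Matrix.unitaryGroup (Fin d) ℂ) : matNorm (u * A) = matNorm A := by
  have hs : uᴴ * u = 1 := by
    rw [← Matrix.star_eq_conjTranspose]; exact hu.1
  unfold matNorm
  congr 1
  conv_lhs => rw [Finset.sum_comm]
  conv_rhs => rw [Finset.sum_comm]
  refine Finset.sum_congr rfl fun j _ => ?_
  rw [col_sum, col_sum]
  congr 2
  rw [Matrix.conjTranspose_mul, Matrix.mul_assoc, ← Matrix.mul_assoc uᴴ, hs, Matrix.one_mul]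

lemma unitary_entry_abs_le {d : ℕ} (x : Matrix.unitaryGroup (Fin d) ℂ) (i j : Fin d) :
    ‖(x : Matrix (Fin d) (Fin d) ℂ) i j‖ ≤ 1 := by
  have hs : (x : Matrix (Fin d) (Fin d) ℂ)ᴴ * x = 1 := by
    rw [← Matrix.star_eq_conjTranspose]; exact x.2.1
  have h1 : ∑ i, ‖(x : Matrix (Fin d) (Fin d) ℂ) i j‖ ^ 2 = 1 := by
    rw [col_sum, hs]; simp
  have h2 : ‖(x : Matrix (Fin d) (Fin d) ℂ) i j‖ ^ 2 ≤ 1 := by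
    rw [← h1]
    exact Finset.single_le_sum
      (f := fun k => ‖(x : Matrix (Fin d) (Fin d) ℂ) k j‖ ^ 2)
      (fun k _ => sq_nonneg _) (Finset.mem_univ i)
  nlinarith [norm_nonneg ((x : Matrix (Fin d) (Fin d) ℂ) i j)]

lemma floor_div_eq_imp {ε a b : ℝ} (hε : 0 < ε) (h : ⌊a / ε⌋ = ⌊b / ε⌋) : |a - b| < ε := by
  have h1 := Int.floor_le (a / ε)
  have h2 := Int.lt_floor_add_one (a / ε)
  have h3 := Int.floor_le (b / ε)
  have h4 := Int.lt_floor_add_one (b / ε)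
  rw [h] at h1 h2
  have ha1 : (⌊b / ε⌋ : ℝ) * ε ≤ a := (le_div_iff₀ hε).mp h1
  have ha2 : a < ((⌊b / ε⌋ : ℝ) + 1) * ε := (div_lt_iff₀ hε).mp h2
  have hb1 : (⌊b / ε⌋ : ℝ) * ε ≤ b := (le_div_iff₀ hε).mp h3
  have hb2 : b < ((⌊b / ε⌋ : ℝ) + 1) * ε := (div_lt_iff₀ hε).mp h4
  rw [abs_sub_lt_iff]
  constructor <;> nlinarith

lemma floor_mem_Icc {ε y : ℝ} (hε : 0 < ε) (hy : |y| ≤ 1) :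
    ⌊y / ε⌋ ∈ Finset.Icc ⌊(-1 : ℝ) / ε⌋ ⌊(1 : ℝ) / ε⌋ := by
  rw [Finset.mem_Icc]
  have h1 : (-1 : ℝ) ≤ y := neg_le_of_abs_le hy
  have h2 : y ≤ 1 := le_of_abs_le hy
  exact ⟨Int.floor_mono (by gcongr), Int.floor_mono (by gcongr)⟩

lemma Icc_card_le {ε : ℝ} (hε : 0 < ε) (hεhalf : ε ≤ 1 / 2) :
    (((Finset.Icc ⌊(-1 : ℝ) / ε⌋ ⌊(1 : ℝ) / ε⌋).card : ℕ) : ℝ) ≤ 3 / ε := by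
  have hab : ⌊(-1 : ℝ) / ε⌋ ≤ ⌊(1 : ℝ) / ε⌋ := by
    apply Int.floor_mono
    have : (-1 : ℝ) ≤ 1 := by norm_num
    gcongr
  rw [Int.card_Icc]
  have hnn : (0 : ℤ) ≤ ⌊(1 : ℝ) / ε⌋ + 1 - ⌊(-1 : ℝ) / ε⌋ := by omega
  have hcast : (((⌊(1 : ℝ) / ε⌋ + 1 - ⌊(-1 : ℝ) / ε⌋).toNat : ℕ) : ℝ)
      = ((⌊(1 : ℝ) / ε⌋ : ℝ) + 1 - (⌊(-1 : ℝ) / ε⌋ : ℝ)) := by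
    rw [← Int.cast_natCast, Int.toNat_of_nonneg hnn]
    push_cast
    ring
  rw [hcast]
  have h1 : (⌊(1 : ℝ) / ε⌋ : ℝ) ≤ 1 / ε := Int.floor_le _
  have h2 : (-1 : ℝ) / ε - 1 < (⌊(-1 : ℝ) / ε⌋ : ℝ) := Int.sub_one_lt_floor _
  have h3 : (2 : ℝ) ≤ 1 / ε := by
    rw [le_div_iff₀ hε]; linarith
  have h4 : (-1 : ℝ) / ε = -(1 / ε) := by ring
  have h5 : (3 : ℝ) / ε = 3 * (1 / ε) := by ring
  linarith

lemma entry_sq_le {ε : ℝ} {z w : ℂ} (hre : |z.re - w.re| < ε) (him : |z.im - w.im| < ε) :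
    ‖z - w‖ ^ 2 ≤ 2 * ε ^ 2 := by
  rw [Complex.sq_norm, Complex.normSq_apply, Complex.sub_re, Complex.sub_im]
  rw [abs_lt] at hre him
  nlinarith [hre.1, hre.2, him.1, him.2]

set_option maxHeartbeats 1000000 in
/-- for `g₁, ..., g_q ∈ U(d)` (q ≥ 2) generating a free group, with
`W_ℓ` the words of length `≤ ℓ` and `W_{ℓ,δ} = {x ∈ W_ℓ : ‖x - 1‖ < δ}`, if
`|W_{ℓ/2}| ≥ c (2q-1)^{ℓ/2}`, then `|W_{ℓ,δ}| ≳ δ^{2d²} (2q-1)^{ℓ/2}`. -/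
theorem stmt14 (d q : ℕ) (hd : 1 ≤ d) (hq : 2 ≤ q)
    (g : Fin q → Matrix.unitaryGroup (Fin d) ℂ)
    (hfree : Function.Injective (FreeGroup.lift g))
    (W : ℕ → Set (Matrix.unitaryGroup (Fin d) ℂ))
    (hW : ∀ ℓ, W ℓ = {x | ∃ L : List (Fin q × Bool),
      L.length ≤ ℓ ∧ x = FreeGroup.lift g (FreeGroup.mk L)})
    (c : ℝ) (hc : 0 < c) :
    ∃ c' : ℝ, 0 < c' ∧ ∀ (ℓ : ℕ) (δ : ℝ), 0 < δ → δ ≤ 1 →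
      c * ((2 * q - 1 : ℝ)) ^ ((ℓ : ℝ) / 2) ≤ ((W (ℓ / 2)).ncard : ℝ) →
      c' * δ ^ (2 * d ^ 2) * ((2 * q - 1 : ℝ)) ^ ((ℓ : ℝ) / 2) ≤
        (({x ∈ W ℓ | matNorm ((x : Matrix (Fin d) (Fin d) ℂ) - 1) < δ}).ncard : ℝ) := by
  classical
  have hd0 : (0 : ℝ) < d := by exact_mod_cast hd
  set n : ℕ := 2 * d ^ 2 with hn
  have h6d : (0 : ℝ) < 6 * d := by linarith
  refine ⟨c / (6 * d) ^ n, div_pos hc (pow_pos h6d n), ?_⟩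
  intro ℓ δ hδ hδ1 hcard
  set R : ℝ := ((2 * q - 1 : ℝ)) ^ ((ℓ : ℝ) / 2) with hR
  have hq2 : (2 : ℝ) ≤ (q : ℝ) := by exact_mod_cast hq
  have hd1 : (1 : ℝ) ≤ (d : ℝ) := by exact_mod_cast hd
  have hRpos : 0 < R := Real.rpow_pos_of_pos (by linarith) _
  -- finiteness of the word sets
  have hWfin : ∀ m, (W m).Finite := by
    intro m
    rw [hW]
    have heq : {x : Matrix.unitaryGroup (Fin d) ℂ | ∃ L : List (Fin q × Bool),
        L.length ≤ m ∧ x = FreeGroup.lift g (FreeGroup.mk L)}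
        = (fun L : List (Fin q × Bool) => FreeGroup.lift g (FreeGroup.mk L)) ''
          {L | L.length ≤ m} := by
      ext x
      simp only [Set.mem_image, Set.mem_setOf_eq]
      constructor
      · rintro ⟨L, hL, rfl⟩; exact ⟨L, hL, rfl⟩
      · rintro ⟨L, hL, rfl⟩; exact ⟨L, hL, rfl⟩
    rw [heq]
    exact (List.finite_length_le _ m).image _
  set F : Finset (Matrix.unitaryGroup (Fin d) ℂ) := (hWfin (ℓ / 2)).toFinset with hF
  have hFcard : ((W (ℓ / 2)).ncard : ℝ) = (F.card : ℝ) := by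
    rw [Set.ncard_eq_toFinset_card _ (hWfin (ℓ / 2))]
  rw [hFcard] at hcard
  have hFpos : 0 < F.card := by
    rcases Nat.eq_zero_or_pos F.card with h | h
    · rw [h] at hcard; norm_num at hcard; nlinarith
    · exact h
  set ε : ℝ := δ / (2 * d) with hε
  have hdne : (d : ℝ) ≠ 0 := ne_of_gt hd0
  have hεpos : 0 < ε := by rw [hε]; exact div_pos hδ (by linarith)
  have hεhalf : ε ≤ 1 / 2 := by
    rw [hε, div_le_div_iff₀ (by linarith : (0:ℝ) < 2 * d) (by norm_num : (0:ℝ) < 2)]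
    linarith
  -- the grid map
  set Φ : Matrix.unitaryGroup (Fin d) ℂ → (Fin d × Fin d) → ℤ × ℤ :=
    fun x p => (⌊((x : Matrix (Fin d) (Fin d) ℂ) p.1 p.2).re / ε⌋,
                ⌊((x : Matrix (Fin d) (Fin d) ℂ) p.1 p.2).im / ε⌋) with hΦ
  set S : Finset ℤ := Finset.Icc ⌊(-1 : ℝ) / ε⌋ ⌊(1 : ℝ) / ε⌋ with hS
  set P : Finset ((Fin d × Fin d) → ℤ × ℤ) := Fintype.piFinset (fun _ => S ×ˢ S) with hP
  have hmemP : ∀ x : Matrix.unitaryGroup (Fin d) ℂ, Φ x ∈ P := by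
    intro x
    rw [hP, Fintype.mem_piFinset]
    intro p
    rw [Finset.mem_product]
    have habs := unitary_entry_abs_le x p.1 p.2
    exact ⟨floor_mem_Icc hεpos (le_trans (Complex.abs_re_le_norm _) habs),
           floor_mem_Icc hεpos (le_trans (Complex.abs_im_le_norm _) habs)⟩
  -- pigeonhole
  set t : Finset ((Fin d × Fin d) → ℤ × ℤ) := F.image Φ with ht
  have htne : t.Nonempty := Finset.Nonempty.image (Finset.card_pos.mp hFpos) _
  obtain ⟨b, hb, hmax⟩ := Finset.exists_max_image t
    (fun b' => (F.filter (fun x => Φ x = b')).card) htne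
  set fb : Finset (Matrix.unitaryGroup (Fin d) ℂ) := F.filter (fun x => Φ x = b) with hfb
  have hsum : F.card = ∑ b' ∈ t, (F.filter (fun x => Φ x = b')).card :=
    Finset.card_eq_sum_card_fiberwise (fun x hx => Finset.mem_image_of_mem _ hx)
  have hFle : F.card ≤ t.card * fb.card := by
    rw [hsum]
    calc ∑ b' ∈ t, (F.filter (fun x => Φ x = b')).card
        ≤ ∑ _b' ∈ t, fb.card := Finset.sum_le_sum (fun b' hb' => hmax b' hb')
      _ = t.card * fb.card := by rw [Finset.sum_const, smul_eq_mul]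
  have htP : t.card ≤ P.card :=
    Finset.card_le_card (fun b' hb' => by
      obtain ⟨x, _, rfl⟩ := Finset.mem_image.mp hb'
      exact hmemP x)
  have hPcard : (P.card : ℝ) ≤ (3 / ε) ^ n := by
    have h1 : P.card = (S.card * S.card) ^ (d * d) := by
      rw [hP, Fintype.card_piFinset]
      rw [Finset.prod_const, Finset.card_product, Finset.card_univ, Fintype.card_prod,
        Fintype.card_fin]
    rw [h1]
    push_cast
    have hScard : (S.card : ℝ) ≤ 3 / ε := Icc_card_le hεpos hεhalf
    have hSnn : (0 : ℝ) ≤ (S.card : ℝ) := Nat.cast_nonneg _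
    calc ((S.card : ℝ) * S.card) ^ (d * d) ≤ ((3 / ε) * (3 / ε)) ^ (d * d) :=
          pow_le_pow_left₀ (mul_nonneg hSnn hSnn)
            (mul_le_mul hScard hScard hSnn (le_trans hSnn hScard)) _
      _ = (3 / ε) ^ n := by
          rw [← sq, ← pow_mul, hn]
          congr 1
          ring
  -- the fiber: pick x₀
  obtain ⟨x₀, hx₀F, hx₀b⟩ := Finset.mem_image.mp hb
  have hx₀fb : x₀ ∈ fb := Finset.mem_filter.mpr ⟨hx₀F, hx₀b⟩
  have hword : ∀ x ∈ F, ∃ L : List (Fin q × Bool),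
      L.length ≤ ℓ / 2 ∧ x = FreeGroup.lift g (FreeGroup.mk L) := by
    intro x hx
    have : x ∈ W (ℓ / 2) := (Set.Finite.mem_toFinset _).mp hx
    rwa [hW] at this
  -- all fiber elements are δ-close to x₀
  have hclose : ∀ y ∈ fb, matNorm ((y : Matrix (Fin d) (Fin d) ℂ) - (x₀ : Matrix (Fin d) (Fin d) ℂ)) < δ := by
    intro y hy
    have hΦy : Φ y = Φ x₀ := by
      rw [(Finset.mem_filter.mp hy).2, hx₀b]
    have hsumle : ∑ i, ∑ j, ‖
        (((y : Matrix (Fin d) (Fin d) ℂ) - (x₀ : Matrix (Fin d) (Fin d) ℂ)) i j)‖ ^ 2 ≤ (d : ℝ) * d * (2 * ε ^ 2) := by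
      calc ∑ i, ∑ j, ‖(((y : Matrix (Fin d) (Fin d) ℂ) - (x₀ : Matrix (Fin d) (Fin d) ℂ)) i j)‖ ^ 2
          ≤ ∑ _i : Fin d, ∑ _j : Fin d, 2 * ε ^ 2 := by
            apply Finset.sum_le_sum
            intro i _
            apply Finset.sum_le_sum
            intro j _
            have h1 : Φ y (i, j) = Φ x₀ (i, j) := by rw [hΦy]
            rw [hΦ] at h1
            simp only [Prod.mk.injEq] at h1
            have hre := floor_div_eq_imp hεpos h1.1
            have him := floor_div_eq_imp hεpos h1.2
            rw [Matrix.sub_apply]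
            exact entry_sq_le (by simpa [Complex.sub_re] using hre)
              (by simpa [Complex.sub_im] using him)
        _ = (d : ℝ) * d * (2 * ε ^ 2) := by
            rw [Finset.sum_const, Finset.sum_const]
            simp [Finset.card_univ]
            ring
    have hlt : (d : ℝ) * d * (2 * ε ^ 2) < δ ^ 2 := by
      rw [hε]
      have heq2 : (d : ℝ) * d * (2 * (δ / (2 * d)) ^ 2) = δ ^ 2 / 2 := by
        field_simp
      rw [heq2]
      nlinarith
    rw [matNorm, show δ = Real.sqrt (δ ^ 2) by rw [Real.sqrt_sq hδ.le]]
    refine Real.sqrt_lt_sqrt ?_ (lt_of_le_of_lt hsumle hlt)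
    apply Finset.sum_nonneg
    intro i _
    apply Finset.sum_nonneg
    intro j _
    exact sq_nonneg _
  -- translate fiber into the target set
  set T : Set (Matrix.unitaryGroup (Fin d) ℂ) :=
    {x ∈ W ℓ | matNorm ((x : Matrix (Fin d) (Fin d) ℂ) - 1) < δ} with hT
  have hTfin : T.Finite := (hWfin ℓ).subset (Set.sep_subset _ _)
  have hmapT : ∀ y ∈ fb, x₀⁻¹ * y ∈ T := by
    intro y hy
    constructor
    · -- word of length ≤ ℓ
      obtain ⟨L₁, hL₁, hx₀eq⟩ := hword x₀ hx₀F
      obtain ⟨L₂, hL₂, hyeq⟩ := hword y (Finset.mem_filter.mp hy).1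
      rw [hW]
      refine ⟨FreeGroup.invRev L₁ ++ L₂, ?_, ?_⟩
      · rw [List.length_append, FreeGroup.invRev_length]
        omega
      · rw [← FreeGroup.mul_mk, ← FreeGroup.inv_mk, map_mul, map_inv, ← hx₀eq, ← hyeq]
    · -- close to 1
      have hcoe : ((x₀⁻¹ * y : Matrix.unitaryGroup (Fin d) ℂ) : Matrix (Fin d) (Fin d) ℂ)
          = star (x₀ : Matrix (Fin d) (Fin d) ℂ) * (y : Matrix (Fin d) (Fin d) ℂ) := by
        rw [Submonoid.coe_mul, ← Unitary.star_eq_inv, Unitary.coe_star]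
      rw [hcoe]
      have h1 : star (x₀ : Matrix (Fin d) (Fin d) ℂ) * (y : Matrix (Fin d) (Fin d) ℂ) - 1
          = star (x₀ : Matrix (Fin d) (Fin d) ℂ)
            * ((y : Matrix (Fin d) (Fin d) ℂ) - (x₀ : Matrix (Fin d) (Fin d) ℂ)) := by
        rw [Matrix.mul_sub, x₀.2.1]
      rw [h1, matNorm_unitary_mul _ _ (Unitary.star_mem x₀.2)]
      exact hclose y hy
  have hinj : Function.Injective (fun y : Matrix.unitaryGroup (Fin d) ℂ => x₀⁻¹ * y) :=
    fun a b h => by simpa using h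
  have hsub : (fun y : Matrix.unitaryGroup (Fin d) ℂ => x₀⁻¹ * y) '' (fb : Set _) ⊆ T := by
    rintro _ ⟨y, hy, rfl⟩
    exact hmapT y hy
  have hfbT : (fb.card : ℝ) ≤ (T.ncard : ℝ) := by
    have hcc : fb.card ≤ T.ncard := by
      rw [← Set.ncard_coe_finset fb,
        ← Set.ncard_image_of_injective (fb : Set _) hinj]
      exact Set.ncard_le_ncard hsub hTfin
    exact_mod_cast hcc
  -- final numeric chain
  have hchain : c * R ≤ (3 / ε) ^ n * (fb.card : ℝ) := by
    calc c * R ≤ (F.card : ℝ) := hcard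
      _ ≤ (t.card : ℝ) * (fb.card : ℝ) := by exact_mod_cast hFle
      _ ≤ (3 / ε) ^ n * (fb.card : ℝ) := by
          apply mul_le_mul_of_nonneg_right _ (Nat.cast_nonneg _)
          exact le_trans (by exact_mod_cast htP) hPcard
  have h3ε : (3 : ℝ) / ε = 6 * d / δ := by
    rw [hε, div_div_eq_mul_div]
    ring
  have hfinal : c / (6 * d) ^ n * δ ^ n * R ≤ (fb.card : ℝ) := by
    rw [div_mul_eq_mul_div, div_mul_eq_mul_div, div_le_iff₀ (pow_pos h6d n)]
    calc c * δ ^ n * R = (c * R) * δ ^ n := by ring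
      _ ≤ ((3 / ε) ^ n * (fb.card : ℝ)) * δ ^ n :=
          mul_le_mul_of_nonneg_right hchain (pow_nonneg hδ.le n)
      _ = (fb.card : ℝ) * (6 * d) ^ n := by
          rw [h3ε, div_pow]
          field_simp
  exact le_trans hfinal hfbT
end

section
/- Let x ∈ SU(d) with |x_{ii}| entries of a matrix x' = ∑_i x_{ii} e_i ⊗ e_i (the diagonal part of x) satisfying ‖x - x'‖ ≲ δ₁. Then |1 - ∏_i |x_{ii}|| ≲ δ₁ and |1 - |x_{ii}|| ≲ δ₁ for each 1 ≤ i ≤ d. -/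
lemma one_sub_prod_le {ι : Type*} (δ : ℝ) (hδ : 0 ≤ δ) (a : ι → ℝ) (s : Finset ι)
    (h : ∀ i ∈ s, 0 ≤ a i ∧ a i ≤ 1 ∧ 1 - a i ≤ δ) :
    1 - ∏ i ∈ s, a i ≤ s.card * δ := by
  induction s using Finset.cons_induction with
  | empty => simp
  | cons i s hi ih =>
    rw [Finset.prod_cons, Finset.card_cons]
    have hi' := h i (Finset.mem_cons_self i s)
    have ih' := ih fun j hj => h j (Finset.mem_cons_of_mem hj)
    have hP0 : 0 ≤ ∏ j ∈ s, a j := Finset.prod_nonneg fun j hj => (h j (Finset.mem_cons_of_mem hj)).1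
    have hP1 : ∏ j ∈ s, a j ≤ 1 :=
      Finset.prod_le_one (fun j hj => (h j (Finset.mem_cons_of_mem hj)).1)
        (fun j hj => (h j (Finset.mem_cons_of_mem hj)).2.1)
    have hc : (0:ℝ) ≤ s.card := Nat.cast_nonneg _
    push_cast
    nlinarith [hi'.1, hi'.2.1, hi'.2.2]

/-- for `x ∈ SU(d)` with `x'` its diagonal part and `‖x - x'‖ ≲ δ₁`,
one has `|1 - ∏_i |x_{ii}|| ≲ δ₁` and `|1 - |x_{ii}|| ≲ δ₁` for each `i`. -/
theorem stmt16 (d : ℕ) (hd : 1 ≤ d) :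
    ∃ C : ℝ, 0 < C ∧
      ∀ (x : Matrix.specialUnitaryGroup (Fin d) ℂ) (δ₁ : ℝ), 0 < δ₁ →
        matNorm ((x : Matrix (Fin d) (Fin d) ℂ) -
          Matrix.diagonal (fun i => (x : Matrix (Fin d) (Fin d) ℂ) i i)) ≤ δ₁ →
        (|1 - ∏ i, ‖(x : Matrix (Fin d) (Fin d) ℂ) i i‖| ≤ C * δ₁ ∧
         ∀ i, |1 - ‖(x : Matrix (Fin d) (Fin d) ℂ) i i‖| ≤ C * δ₁) := by
  refine ⟨d, by exact_mod_cast Nat.lt_of_lt_of_le Nat.zero_lt_one hd, ?_⟩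
  intro x δ₁ hδ hnorm
  set X : Matrix (Fin d) (Fin d) ℂ := (x : Matrix (Fin d) (Fin d) ℂ) with hXdef
  -- column norms are 1
  have hunit : star X * X = 1 := by
    have hx : X ∈ Matrix.unitaryGroup (Fin d) ℂ :=
      ((Matrix.mem_specialUnitaryGroup_iff).mp x.2).1
    exact (Matrix.mem_unitaryGroup_iff').mp hx
  have hcol : ∀ i, ∑ j, ‖X j i‖ ^ 2 = 1 := by
    intro i
    have h1 : (star X * X) i i = 1 := by rw [hunit]; simp
    rw [Matrix.mul_apply] at h1
    have h2 : ∑ j, (star X) i j * X j i = ∑ j, ((‖X j i‖ ^ 2 : ℝ) : ℂ) := by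
      apply Finset.sum_congr rfl
      intro j _
      rw [Matrix.star_apply]
      rw [Complex.sq_norm]
      rw [Complex.normSq_eq_conj_mul_self]
      rfl
    rw [h2] at h1
    have := congrArg Complex.re h1
    simpa [← Complex.ofReal_pow] using this
  have habs0 : ∀ i, 0 ≤ ‖X i i‖ := fun i => norm_nonneg _
  have habs1 : ∀ i, ‖X i i‖ ≤ 1 := by
    intro i
    have h1 : ‖X i i‖ ^ 2 ≤ 1 := by
      rw [← hcol i]
      exact Finset.single_le_sum (f := fun j => ‖X j i‖ ^ 2)
        (fun j _ => sq_nonneg _) (Finset.mem_univ i)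
    nlinarith [habs0 i]
  -- Frobenius norm bound gives sum of off-diagonal squares ≤ δ₁²
  have hS : ∑ i, ∑ j, ‖(X - Matrix.diagonal (fun k => X k k)) i j‖ ^ 2 ≤ δ₁ ^ 2 := by
    have h0 : 0 ≤ ∑ i, ∑ j, ‖(X - Matrix.diagonal (fun k => X k k)) i j‖ ^ 2 :=
      Finset.sum_nonneg fun i _ => Finset.sum_nonneg fun j _ => sq_nonneg _
    have := Real.sqrt_le_sqrt (le_of_eq (Real.sq_sqrt h0).symm)
    calc ∑ i, ∑ j, ‖(X - Matrix.diagonal (fun k => X k k)) i j‖ ^ 2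
        = (Real.sqrt (∑ i, ∑ j, ‖(X - Matrix.diagonal (fun k => X k k)) i j‖ ^ 2)) ^ 2 :=
          (Real.sq_sqrt h0).symm
      _ ≤ δ₁ ^ 2 := by
          apply pow_le_pow_left₀ (Real.sqrt_nonneg _) _ 2
          exact hnorm
  have hkey : ∀ i, 1 - ‖X i i‖ ^ 2 ≤ δ₁ ^ 2 := by
    intro i
    have hsplit : 1 - ‖X i i‖ ^ 2 = ∑ j ∈ Finset.univ.erase i, ‖X j i‖ ^ 2 := by
      have := hcol i
      rw [← Finset.add_sum_erase _ _ (Finset.mem_univ i)] at this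
      linarith
    rw [hsplit]
    have hterm : ∀ j ∈ Finset.univ.erase i,
        ‖X j i‖ ^ 2 = ‖(X - Matrix.diagonal (fun k => X k k)) j i‖ ^ 2 := by
      intro j hj
      have hne : j ≠ i := Finset.ne_of_mem_erase hj
      simp [Matrix.sub_apply, Matrix.diagonal_apply_ne _ hne]
    rw [Finset.sum_congr rfl hterm]
    calc ∑ j ∈ Finset.univ.erase i, ‖(X - Matrix.diagonal (fun k => X k k)) j i‖ ^ 2
        ≤ ∑ j, ‖(X - Matrix.diagonal (fun k => X k k)) j i‖ ^ 2 :=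
          Finset.sum_le_sum_of_subset_of_nonneg (Finset.erase_subset _ _)
            (fun j _ _ => sq_nonneg _)
      _ ≤ ∑ j, ∑ k, ‖(X - Matrix.diagonal (fun k => X k k)) j k‖ ^ 2 := by
          apply Finset.sum_le_sum
          intro j _
          exact Finset.single_le_sum
            (f := fun k => ‖(X - Matrix.diagonal (fun k => X k k)) j k‖ ^ 2)
            (fun k _ => sq_nonneg _) (Finset.mem_univ i)
      _ ≤ δ₁ ^ 2 := hS
  -- individual bound with constant 1
  have hind : ∀ i, 1 - ‖X i i‖ ≤ δ₁ := by
    intro i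
    rcases le_or_gt δ₁ 1 with h | h
    · nlinarith [hkey i, habs0 i, habs1 i]
    · nlinarith [habs0 i]
  have hd1 : (1:ℝ) ≤ d := by exact_mod_cast hd
  constructor
  · have hprod0 : 0 ≤ ∏ i, ‖X i i‖ := Finset.prod_nonneg fun i _ => habs0 i
    have hprod1 : ∏ i, ‖X i i‖ ≤ 1 :=
      Finset.prod_le_one (fun i _ => habs0 i) (fun i _ => habs1 i)
    have := one_sub_prod_le δ₁ hδ.le (fun i => ‖X i i‖) Finset.univ
      (fun i _ => ⟨habs0 i, habs1 i, hind i⟩)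
    rw [abs_of_nonneg (by linarith)]
    simpa using this
  · intro i
    rw [abs_of_nonneg (by linarith [habs1 i])]
    calc 1 - ‖X i i‖ ≤ δ₁ := hind i
      _ = 1 * δ₁ := (one_mul _).symm
      _ ≤ d * δ₁ := by apply mul_le_mul_of_nonneg_right hd1 hδ.le
end

section
/- Let η ∈ Mat_{d×d}(ℂ) with 1 + η ∈ SU(d) and ‖η‖ < δ < 1/2. Then ‖η + η*‖ = O(‖η‖²) and |Tr η| = O(‖η‖²); consequently there exists a ∈ su(d) (anti-Hermitian, trace zero) with ‖η - a‖ ≲ ‖η‖². -/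
open scoped Matrix

attribute [local instance] Matrix.frobeniusNormedAddCommGroup Matrix.frobeniusNormedSpace
  Matrix.frobeniusIsBoundedSMul

lemma matNorm_eq {d : ℕ} (A : Matrix (Fin d) (Fin d) ℂ) : matNorm A = ‖A‖ := by
  rw [Matrix.frobenius_norm_def, matNorm, Real.sqrt_eq_rpow]
  norm_num [Real.rpow_natCast]

lemma matNorm_nonneg {d : ℕ} (A : Matrix (Fin d) (Fin d) ℂ) : 0 ≤ matNorm A :=
  Real.sqrt_nonneg _

lemma entry_le_matNorm {d : ℕ} (A : Matrix (Fin d) (Fin d) ℂ) (i j : Fin d) :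
    ‖A i j‖ ≤ matNorm A := by
  have h1 : ‖A i j‖ ^ 2 ≤ ∑ i, ∑ j, ‖A i j‖ ^ 2 := by
    calc ‖A i j‖ ^ 2 ≤ ∑ j', ‖A i j'‖ ^ 2 :=
          Finset.single_le_sum (f := fun j' => ‖A i j'‖ ^ 2) (fun _ _ => sq_nonneg _) (Finset.mem_univ j)
      _ ≤ _ := Finset.single_le_sum (f := fun i => ∑ j', ‖A i j'‖ ^ 2)
          (fun _ _ => Finset.sum_nonneg fun _ _ => sq_nonneg _) (Finset.mem_univ i)
  calc ‖A i j‖ = Real.sqrt (‖A i j‖ ^ 2) :=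
        (Real.sqrt_sq (norm_nonneg _)).symm
    _ ≤ matNorm A := Real.sqrt_le_sqrt h1

lemma trace_bound {d : ℕ} (η : Matrix (Fin d) (Fin d) ℂ)
    (hdet : (1 + η).det = 1) (hε1 : matNorm η ≤ 1) :
    ‖η.trace‖ ≤
      ((2:ℝ)^d + (Fintype.card (Equiv.Perm (Fin d))) * 2^d) * matNorm η ^ 2 := by
  classical
  set ε := matNorm η with hεdef
  have hε0 : 0 ≤ ε := matNorm_nonneg η
  have hent : ∀ i j, ‖η i j‖ ≤ ε := entry_le_matNorm η
  set E1 : ℂ := ∑ t ∈ Finset.univ.powerset.filter (fun t => ¬ t.card ≤ 1),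
      ∏ i ∈ t, η i i with hE1def
  set E2 : ℂ := ∑ σ ∈ Finset.univ.erase (1 : Equiv.Perm (Fin d)),
      Equiv.Perm.sign σ • ∏ i, (1 + η) (σ i) i with hE2def
  -- expand determinant
  rw [Matrix.det_apply,
    ← Finset.add_sum_erase _ _ (Finset.mem_univ (1 : Equiv.Perm (Fin d)))] at hdet
  have hid : (Equiv.Perm.sign (1 : Equiv.Perm (Fin d))) •
      ∏ i, (1 + η) ((1 : Equiv.Perm (Fin d)) i) i = (1 + η.trace) + E1 := by
    simp only [Equiv.Perm.sign_one, one_smul, Equiv.Perm.one_apply, Matrix.add_apply,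
      Matrix.one_apply_eq]
    rw [Finset.prod_congr rfl (fun i _ => add_comm (1:ℂ) (η i i)), Finset.prod_add]
    rw [← Finset.sum_filter_add_sum_filter_not Finset.univ.powerset (fun t => t.card ≤ 1)]
    have hS1 : Finset.univ.powerset.filter (fun t => t.card ≤ 1) =
        insert ∅ (Finset.univ.image fun i : Fin d => ({i} : Finset (Fin d))) := by
      ext t
      simp only [Finset.mem_filter, Finset.mem_powerset, Finset.subset_univ, true_and,
        Finset.mem_insert, Finset.mem_image, Finset.mem_univ, true_and,
        Nat.le_one_iff_eq_zero_or_eq_one, Finset.card_eq_zero, Finset.card_eq_one]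
      constructor
      · rintro (h | ⟨a, h⟩)
        · exact Or.inl h
        · exact Or.inr ⟨a, h.symm⟩
      · rintro (h | ⟨a, h⟩)
        · exact Or.inl h
        · exact Or.inr ⟨a, h.symm⟩
    rw [hS1, Finset.sum_insert (by simp), Finset.sum_image
      (fun x _ y _ h => Finset.singleton_injective h)]
    rw [hE1def]
    simp only [Finset.prod_empty, Finset.prod_singleton, Finset.prod_const_one, mul_one, one_mul, Matrix.trace, Matrix.diag]
  rw [hid] at hdet
  have hkey : η.trace = -(E1 + E2) := by
    rw [← hE2def] at hdet
    linear_combination hdet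
  -- bound E1
  have habs1 : ‖E1‖ ≤ (2:ℝ)^d * ε^2 := by
    calc ‖E1‖ ≤ ∑ t ∈ Finset.univ.powerset.filter
          (fun t : Finset (Fin d) => ¬ t.card ≤ 1), ‖∏ i ∈ t, η i i‖ :=
        norm_sum_le _ _
      _ ≤ ∑ t ∈ Finset.univ.powerset.filter (fun t : Finset (Fin d) => ¬ t.card ≤ 1), ε^2 := by
        refine Finset.sum_le_sum fun t ht => ?_
        have h2 : 2 ≤ t.card := by
          have := (Finset.mem_filter.mp ht).2; omega
        calc ‖∏ i ∈ t, η i i‖ = ∏ i ∈ t, ‖η i i‖ :=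
              norm_prod _ _
          _ ≤ ∏ i ∈ t, ε := Finset.prod_le_prod (fun _ _ => norm_nonneg _)
              (fun i _ => hent i i)
          _ = ε ^ t.card := Finset.prod_const ε
          _ ≤ ε ^ 2 := pow_le_pow_of_le_one hε0 hε1 h2
      _ ≤ (2:ℝ)^d * ε^2 := by
        rw [Finset.sum_const, nsmul_eq_mul]
        have hcard : (Finset.univ.powerset.filter
            (fun t : Finset (Fin d) => ¬ t.card ≤ 1)).card ≤ 2^d := by
          calc _ ≤ (Finset.univ : Finset (Fin d)).powerset.card := Finset.card_filter_le _ _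
            _ = 2^d := by simp [Finset.card_powerset]
        have : ((Finset.univ.powerset.filter
            (fun t : Finset (Fin d) => ¬ t.card ≤ 1)).card : ℝ) ≤ (2:ℝ)^d := by
          exact_mod_cast hcard
        exact mul_le_mul_of_nonneg_right this (sq_nonneg _)
  -- bound E2
  have habs2 : ‖E2‖ ≤ (Fintype.card (Equiv.Perm (Fin d))) * ((2:ℝ)^d * ε^2) := by
    have hterm : ∀ σ ∈ Finset.univ.erase (1 : Equiv.Perm (Fin d)),
        ‖Equiv.Perm.sign σ • ∏ i, (1 + η) (σ i) i‖ ≤ (2:ℝ)^d * ε^2 := by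
      intro σ hσ
      have hσ1 : σ ≠ 1 := (Finset.mem_erase.mp hσ).1
      have habs_eq : ‖Equiv.Perm.sign σ • ∏ i, (1 + η) (σ i) i‖
          = ‖∏ i, (1 + η) (σ i) i‖ := by
        rcases Int.units_eq_one_or (Equiv.Perm.sign σ) with h | h <;> simp [h]
      rw [habs_eq]
      calc ‖∏ i, (1 + η) (σ i) i‖ = ∏ i, ‖(1 + η) (σ i) i‖ :=
            norm_prod _ _
        _ ≤ ∏ i, (if σ i = i then (2:ℝ) else ε) := by
          refine Finset.prod_le_prod (fun _ _ => norm_nonneg _) fun i _ => ?_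
          by_cases h : σ i = i
          · simp only [h, if_pos, Matrix.add_apply, Matrix.one_apply_eq]
            calc ‖1 + η i i‖ ≤ ‖1‖ + ‖η i i‖ :=
                  norm_add_le _ _
              _ ≤ 1 + 1 := by
                  have := le_trans (hent i i) hε1; simp; linarith
              _ = 2 := by norm_num
          · simp only [h, if_neg, Matrix.add_apply, Matrix.one_apply_ne h, zero_add,
              not_false_iff]
            exact hent _ _
        _ ≤ (2:ℝ)^d * ε^2 := by
          rw [← Finset.prod_filter_mul_prod_filter_not Finset.univ (fun i => σ i = i)]
          have he1 : ∏ i ∈ Finset.univ.filter (fun i => σ i = i),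
              (if σ i = i then (2:ℝ) else ε) = 2 ^ (Finset.univ.filter
                (fun i => σ i = i)).card := by
            rw [Finset.prod_congr rfl (fun i hi => if_pos (Finset.mem_filter.mp hi).2)]
            exact Finset.prod_const 2
          have he2 : ∏ i ∈ Finset.univ.filter (fun i => ¬ σ i = i),
              (if σ i = i then (2:ℝ) else ε) = ε ^ (Finset.univ.filter
                (fun i => ¬ σ i = i)).card := by
            rw [Finset.prod_congr rfl (fun i hi => if_neg (Finset.mem_filter.mp hi).2)]
            exact Finset.prod_const ε
          rw [he1, he2]
          have hsupp : Finset.univ.filter (fun i => ¬ σ i = i) = σ.support := by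
            ext i; simp [Equiv.Perm.mem_support]
          have hm : 2 ≤ (Finset.univ.filter (fun i => ¬ σ i = i)).card := by
            rw [hsupp]; exact Equiv.Perm.two_le_card_support_of_ne_one hσ1
          have ha : (Finset.univ.filter (fun i => σ i = i)).card ≤ d := by
            calc _ ≤ (Finset.univ : Finset (Fin d)).card := Finset.card_filter_le _ _
              _ = d := by simp
          exact mul_le_mul (pow_le_pow_right₀ one_le_two ha)
            (pow_le_pow_of_le_one hε0 hε1 hm) (pow_nonneg hε0 _) (pow_nonneg (by norm_num) _)
    calc ‖E2‖ ≤ ∑ σ ∈ Finset.univ.erase (1 : Equiv.Perm (Fin d)),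
          ‖Equiv.Perm.sign σ • ∏ i, (1 + η) (σ i) i‖ := norm_sum_le _ _
      _ ≤ (Finset.univ.erase (1 : Equiv.Perm (Fin d))).card * ((2:ℝ)^d * ε^2) := by
          rw [← nsmul_eq_mul]
          exact Finset.sum_le_card_nsmul _ _ _ hterm
      _ ≤ _ := by
          refine mul_le_mul_of_nonneg_right ?_ (by positivity)
          exact_mod_cast le_trans (Finset.card_erase_le) (le_of_eq (by simp))
  calc ‖η.trace‖ = ‖E1 + E2‖ := by rw [hkey, norm_neg]
    _ ≤ ‖E1‖ + ‖E2‖ := norm_add_le _ _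
    _ ≤ (2:ℝ)^d * ε^2 + (Fintype.card (Equiv.Perm (Fin d))) * ((2:ℝ)^d * ε^2) := by
        exact add_le_add habs1 habs2
    _ = ((2:ℝ)^d + (Fintype.card (Equiv.Perm (Fin d))) * 2^d) * ε ^ 2 := by ring

/-- if `1 + η ∈ SU(d)` and `‖η‖ < δ < 1/2`, then `‖η + η*‖ = O(‖η‖²)` and
`|Tr η| = O(‖η‖²)`; consequently there is `a ∈ su(d)` (anti-Hermitian, trace zero) with
`‖η - a‖ ≲ ‖η‖²`. -/
theorem stmt17 (d : ℕ) (hd : 1 ≤ d) :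
    ∃ C : ℝ, 0 < C ∧
      ∀ (η : Matrix (Fin d) (Fin d) ℂ) (δ : ℝ),
        (1 + η) ∈ Matrix.specialUnitaryGroup (Fin d) ℂ →
        matNorm η < δ → δ < 1 / 2 →
        (matNorm (η + ηᴴ) ≤ C * matNorm η ^ 2 ∧
         ‖η.trace‖ ≤ C * matNorm η ^ 2 ∧
         ∃ a : Matrix (Fin d) (Fin d) ℂ, aᴴ = -a ∧ a.trace = 0 ∧
           matNorm (η - a) ≤ C * matNorm η ^ 2) := by
  classical
  set N : ℝ := (Fintype.card (Equiv.Perm (Fin d)) : ℝ) with hN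
  have hN0 : 0 ≤ N := Nat.cast_nonneg _
  set C : ℝ := (2:ℝ)^d + N * 2^d + 2 with hC
  have hC2 : (2:ℝ)^d + N * 2^d ≤ C := by rw [hC]; linarith
  have hCpos : 0 < C := by positivity
  refine ⟨C, hCpos, ?_⟩
  intro η δ hmem hδ1 hδ2
  set ε := matNorm η with hεdef
  have hε0 : 0 ≤ ε := matNorm_nonneg η
  have hε1 : ε ≤ 1 := by linarith
  have hsq : 0 ≤ ε ^ 2 := sq_nonneg _
  obtain ⟨huni, hdet⟩ := Matrix.mem_specialUnitaryGroup_iff.mp hmem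
  -- unitarity
  have h1 : (1 + η)ᴴ * (1 + η) = 1 := by
    have := (Matrix.mem_unitaryGroup_iff'.mp huni)
    rwa [Matrix.star_eq_conjTranspose] at this
  have key : η + ηᴴ = -(ηᴴ * η) := by
    have e : (1 + η)ᴴ * (1 + η) = 1 + (η + ηᴴ + ηᴴ * η) := by
      rw [Matrix.conjTranspose_add, Matrix.conjTranspose_one, add_mul, one_mul, mul_add, mul_one]
      abel
    rw [e] at h1
    nth_rewrite 2 [← add_zero (1 : Matrix (Fin d) (Fin d) ℂ)] at h1
    have h3 := add_left_cancel h1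
    rw [eq_neg_iff_add_eq_zero]
    exact h3
  -- part 1
  have part1 : matNorm (η + ηᴴ) ≤ ε ^ 2 := by
    rw [matNorm_eq, key, norm_neg]
    calc ‖ηᴴ * η‖ ≤ ‖ηᴴ‖ * ‖η‖ := Matrix.frobenius_norm_mul _ _
      _ = ‖η‖ * ‖η‖ := by rw [Matrix.frobenius_norm_conjTranspose]
      _ = ε ^ 2 := by rw [← matNorm_eq, ← hεdef]; ring
  -- part 2
  have part2 : ‖η.trace‖ ≤ ((2:ℝ)^d + N * 2^d) * ε ^ 2 :=
    trace_bound η hdet hε1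
  have hC1 : (1:ℝ) ≤ C := by
    have h2d : (0:ℝ) ≤ (2:ℝ)^d := by positivity
    nlinarith
  refine ⟨le_trans part1 (le_mul_of_one_le_left hsq hC1),
    le_trans part2 (mul_le_mul_of_nonneg_right hC2 hsq), ?_⟩
  -- part 3
  set z : ℂ := (η.trace - (starRingEnd ℂ) η.trace) / 2 with hzdef
  have hz : (starRingEnd ℂ) z = -z := by
    rw [hzdef]
    simp only [map_div₀, map_sub, Complex.conj_conj, map_ofNat]
    ring
  have hzabs : ‖z‖ ≤ ‖η.trace‖ := by
    rw [hzdef, norm_div, Complex.norm_two, div_le_iff₀ (by norm_num : (0:ℝ) < 2)]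
    calc ‖η.trace - (starRingEnd ℂ) η.trace‖
        ≤ ‖η.trace‖ + ‖(starRingEnd ℂ) η.trace‖ := by
          rw [sub_eq_add_neg]
          exact le_trans (norm_add_le _ _) (by rw [norm_neg])
      _ = ‖η.trace‖ * 2 := by rw [Complex.norm_conj]; ring
  refine ⟨(2⁻¹ : ℂ) • (η - ηᴴ) - (z / (d:ℂ)) • 1, ?_, ?_, ?_⟩
  · have h2 : star (2⁻¹ : ℂ) = 2⁻¹ := by simp
    have h3 : star (z / (d:ℂ)) = -(z / (d:ℂ)) := by
      rw [RCLike.star_def, map_div₀, hz, Complex.conj_natCast, neg_div]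
    simp only [Matrix.conjTranspose_sub, Matrix.conjTranspose_smul, Matrix.conjTranspose_one,
      Matrix.conjTranspose_conjTranspose, h2, h3]
    module
  · have hdz : ((d:ℂ)) ≠ 0 := Nat.cast_ne_zero.mpr (by omega)
    rw [Matrix.trace_sub, Matrix.trace_smul, Matrix.trace_smul, Matrix.trace_sub,
      Matrix.trace_one, Matrix.trace_conjTranspose]
    simp only [smul_eq_mul, Fintype.card_fin, Complex.star_def]
    rw [hzdef]
    field_simp
    ring
  · have hηa : η - ((2⁻¹ : ℂ) • (η - ηᴴ) - (z / (d:ℂ)) • 1)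
        = (2⁻¹ : ℂ) • (η + ηᴴ) + (z / (d:ℂ)) • 1 := by module
    rw [hηa, matNorm_eq]
    have hd1 : (1:ℝ) ≤ (d:ℝ) := (Nat.one_le_cast (α := ℝ)).mpr hd
    have hnorm1 : ‖(1 : Matrix (Fin d) (Fin d) ℂ)‖ ≤ (d:ℝ) := by
      have h := Matrix.frobenius_nnnorm_one (n := Fin d) (α := ℂ)
      have h' : ‖(1 : Matrix (Fin d) (Fin d) ℂ)‖ = Real.sqrt d := by
        have := congrArg (fun x : NNReal => (x : ℝ)) h
        simpa using this
      rw [h']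
      calc Real.sqrt d ≤ Real.sqrt ((d:ℝ)^2) := Real.sqrt_le_sqrt (by nlinarith)
        _ = d := Real.sqrt_sq (Nat.cast_nonneg d)
    calc ‖(2⁻¹ : ℂ) • (η + ηᴴ) + (z / (d:ℂ)) • 1‖
        ≤ ‖(2⁻¹ : ℂ) • (η + ηᴴ)‖ + ‖(z / (d:ℂ)) • (1 : Matrix (Fin d) (Fin d) ℂ)‖ :=
          norm_add_le _ _
      _ = 2⁻¹ * ‖η + ηᴴ‖ + (‖z‖ / d) * ‖(1 : Matrix (Fin d) (Fin d) ℂ)‖ := by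
          rw [norm_smul, norm_smul]
          simp [norm_div, Complex.norm_natCast]
      _ ≤ 2⁻¹ * ε ^ 2 + (‖z‖ / d) * d := by
          refine add_le_add ?_ ?_
          · have := part1; rw [matNorm_eq] at this; linarith
          · exact mul_le_mul_of_nonneg_left hnorm1 (by positivity)
      _ ≤ 2⁻¹ * ε ^ 2 + ‖η.trace‖ := by
          have : ‖z‖ / d * d = ‖z‖ := by field_simp
          rw [this]
          exact add_le_add_right hzabs _
      _ ≤ C * ε ^ 2 := by nlinarith
end

section
/- Let d ≥ 3 and let L ⊆ Mat_{d×d}(ℂ) be a subspace such that for every nonzero x ∈ ℂ^d there exists a nonzero x' with ⟨x, x'⟩ = 0 and x ⊗ x' ∈ L, where moreover the assignment can be chosen continuously on some open set O ⊆ ℂ^d (as a continuous map φ: O → ℂ^d \ {0} with ⟨x, φ(x)⟩ = 0 and x ⊗ φ(x) ∈ L). If additionally the image of φ spans a 2-dimensional complex subspace [e₁, e₂] (so φ(x) is parallel to -x̄₂ e₁ + x̄₁ e₂ for x = x₁e₁ + x₂e₂ + x₃e₃ when d = 3), then dim L ≥ 5. -/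
open Matrix

noncomputable def vv (x : Fin 3 → ℂ) : Fin 3 → ℂ :=
  ![-(starRingEnd ℂ (x 1)), starRingEnd ℂ (x 0), 0]

/-- let `L ⊆ Mat₃ₓ₃(ℂ)` be a subspace such that every nonzero `x ∈ ℂ³` has a
nonzero `x'` orthogonal to it with `x ⊗ x' ∈ L`, the choice being continuous on an open set
`O` via `φ` with `⟨x, φ(x)⟩ = 0` and `x ⊗ φ(x) ∈ L`; if moreover the image of `φ` lies in
the plane `[e₁, e₂]`, i.e. `φ(x)` is parallel to `-x̄₂ e₁ + x̄₁ e₂`, then `dim L ≥ 5`. -/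
theorem stmt19 (L : Submodule ℂ (Matrix (Fin 3) (Fin 3) ℂ))
    (hL : ∀ x : Fin 3 → ℂ, x ≠ 0 → ∃ x' : Fin 3 → ℂ, x' ≠ 0 ∧
      dotProduct (star x) x' = 0 ∧ Matrix.vecMulVec x x' ∈ L)
    (O : Set (Fin 3 → ℂ)) (hO : IsOpen O) (hOne : O.Nonempty)
    (φ : (Fin 3 → ℂ) → (Fin 3 → ℂ)) (hφcont : ContinuousOn φ O)
    (hφnz : ∀ x ∈ O, φ x ≠ 0)
    (hφorth : ∀ x ∈ O, dotProduct (star x) (φ x) = 0)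
    (hφL : ∀ x ∈ O, Matrix.vecMulVec x (φ x) ∈ L)
    (hφpar : ∀ x ∈ O, ∃ c : ℂ,
      φ x = c • ![-(starRingEnd ℂ (x 1)), starRingEnd ℂ (x 0), 0]) :
    5 ≤ Module.finrank ℂ L := by
  -- Step 1: for x ∈ O, vecMulVec x (vv x) ∈ L
  have hM : ∀ x ∈ O, Matrix.vecMulVec x (vv x) ∈ L := by
    intro x hx
    obtain ⟨c, hc⟩ := hφpar x hx
    have hcne : c ≠ 0 := by
      rintro rfl
      exact hφnz x hx (by simpa using hc)
    have h1 : Matrix.vecMulVec x (φ x) = c • Matrix.vecMulVec x (vv x) := by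
      ext a b
      fin_cases b <;>
        simp [vv, Matrix.vecMulVec_apply, hc, Pi.smul_apply, smul_eq_mul] <;> ring
    have := hφL x hx
    rw [h1] at this
    have h2 := L.smul_mem c⁻¹ this
    rwa [smul_smul, inv_mul_cancel₀ hcne, one_smul] at h2
  -- Step 2: polarization: for all u, vecMulVec u (vv u) ∈ L
  obtain ⟨p, hp⟩ := hOne
  have hN : ∀ u : Fin 3 → ℂ, Matrix.vecMulVec u (vv u) ∈ L := by
    intro u
    -- find small real t with p ± t•u ∈ O
    have hcont : Continuous (fun t : ℝ => p + t • u) := by continuity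
    have hopen : IsOpen ((fun t : ℝ => p + t • u) ⁻¹' O) := hO.preimage hcont
    have h0 : (0 : ℝ) ∈ (fun t : ℝ => p + t • u) ⁻¹' O := by
      simpa using hp
    obtain ⟨ε, hε, hball⟩ := Metric.isOpen_iff.mp hopen 0 h0
    set t : ℝ := ε / 2 with ht
    have htpos : (0 : ℝ) < t := by positivity
    have hmem : ∀ s : ℝ, |s| < ε → p + s • u ∈ O := by
      intro s hs
      exact hball (by simpa [Real.dist_eq] using hs)
    have h1 : p + t • u ∈ O := hmem t (by rw [abs_of_pos htpos]; linarith)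
    have h2 : p + (-t) • u ∈ O := hmem (-t) (by rw [abs_neg, abs_of_pos htpos]; linarith)
    have key : Matrix.vecMulVec (p + t • u) (vv (p + t • u))
        + Matrix.vecMulVec (p + (-t) • u) (vv (p + (-t) • u))
        = (2 : ℂ) • Matrix.vecMulVec p (vv p)
          + (2 * (t : ℂ) ^ 2) • Matrix.vecMulVec u (vv u) := by
      ext a b
      fin_cases b <;>
        simp [vv, Matrix.vecMulVec_apply, Pi.add_apply, Pi.smul_apply,
          Complex.real_smul, map_add, _root_.map_mul, Complex.conj_ofReal, Pi.smul_apply,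
          smul_eq_mul] <;> ring
    have htc : (2 * (t : ℂ) ^ 2) ≠ 0 :=
      mul_ne_zero two_ne_zero (pow_ne_zero _ (by exact_mod_cast htpos.ne'))
    have hmemL : (2 * (t : ℂ) ^ 2) • Matrix.vecMulVec u (vv u) ∈ L := by
      have := L.sub_mem (L.add_mem (hM _ h1) (hM _ h2)) (L.smul_mem (2 : ℂ) (hM p hp))
      rwa [key, add_sub_cancel_left] at this
    have := L.smul_mem (2 * (t : ℂ) ^ 2)⁻¹ hmemL
    rwa [smul_smul, inv_mul_cancel₀ htc, one_smul] at this
  -- Step 3: five explicit linearly independent members of L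
  set u1 : Fin 3 → ℂ := ![1, 0, 0]
  set u2 : Fin 3 → ℂ := ![0, 1, 0]
  set u3 : Fin 3 → ℂ := ![1, 0, 1]
  set u4 : Fin 3 → ℂ := ![0, 1, 1]
  set u5 : Fin 3 → ℂ := ![1, 1, 0]
  set f : Fin 5 → L := ![⟨_, hN u1⟩, ⟨_, hN u2⟩, ⟨_, hN u3⟩, ⟨_, hN u4⟩, ⟨_, hN u5⟩]
  have hind : LinearIndependent ℂ f := by
    rw [Fintype.linearIndependent_iff]
    intro g hg
    have hg' : (g 0 • Matrix.vecMulVec u1 (vv u1) + g 1 • Matrix.vecMulVec u2 (vv u2)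
        + g 2 • Matrix.vecMulVec u3 (vv u3) + g 3 • Matrix.vecMulVec u4 (vv u4)
        + g 4 • Matrix.vecMulVec u5 (vv u5)) = 0 := by
      have := congrArg (Submodule.subtype L) hg
      simpa [f, Fin.sum_univ_five, add_assoc] using this
    have e : ∀ a b : Fin 3, (g 0 • Matrix.vecMulVec u1 (vv u1) + g 1 • Matrix.vecMulVec u2 (vv u2)
        + g 2 • Matrix.vecMulVec u3 (vv u3) + g 3 • Matrix.vecMulVec u4 (vv u4)
        + g 4 • Matrix.vecMulVec u5 (vv u5)) a b = 0 := by
      intro a b; rw [hg']; rfl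
    have e00 := e 0 0
    have e01 := e 0 1
    have e10 := e 1 0
    have e20 := e 2 0
    have e21 := e 2 1
    simp [vv, u1, u2, u3, u4, u5, Matrix.vecMulVec_apply, Matrix.add_apply,
      Matrix.smul_apply, smul_eq_mul] at e00 e01 e10 e20 e21
    intro i
    fin_cases i
    · show g 0 = 0
      linear_combination e01 - e21 - e00
    · show g 1 = 0
      linear_combination -e10 - e20 - e00
    · exact e21
    · exact e20
    · exact e00
  have := hind.fintype_card_le_finrank
  simpa using this
end
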